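/- For each nonzero integer n, the signed crossing count wr_n(K) = sum over classical crossings c of K with W_K(c) = n of sgn(c) is an invariant of virtual knots, i.e., it is unchanged under oriented virtual isotopy (classical Reidemeister moves, virtual Reidemeister moves and the detour move). -/

import Mathlib

/-!
# Virtual knots and links via signed Gauss codes

A virtual knot or link diagram, up to the virtual Reidemeister moves and the
detour move, is faithfully encoded by its signed oriented Gauss code: the
cyclic sequence, along each component, of passages through the classical
crossings, each passage recording the crossing's name, whether the strand
passes over or under, and the crossing sign.  Virtual crossings and the
detour move are invisible in this encoding, so oriented virtual isotopy is
generated by the oriented classical Reidemeister moves together with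
re-encoding moves (rotation of the base point, permutation of the components,
renaming of the crossings).
-/

open LaurentPolynomial

/-- A passage of a strand through a classical crossing of a virtual diagram. -/
structure Passage where
  id : ℕ
  isOver : Bool
  sign : ℤ
  deriving DecidableEq, Repr

instance : Inhabited Passage := ⟨⟨0, false, 0⟩⟩

/-- The affine-label increment when the strand passes through a crossing:
crossing to the left increases the label by one, crossing to the right
decreases it by one.  For a positive crossing the over-strand crosses to the
right and the under-strand to the left; for a negative crossing it is the
other way around.  Labels are unchanged at virtual crossings. -/
def Passage.inc (p : Passage) : ℤ := if p.isOver then -p.sign else p.sign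

/-- The Gauss code of one oriented circle component. -/
abbrev KCode := List Passage

/-- The list of classical crossing names appearing in a code. -/
def crossIds (a : KCode) : List ℕ := (a.map Passage.id).dedup

/-- The number of classical crossings. -/
def numCross (a : KCode) : ℕ := (crossIds a).length

/-- A valid knot code: every crossing has sign `±1` and occurs exactly once as
an over-passage and exactly once as an under-passage, with consistent sign. -/
def ValidK (a : KCode) : Prop :=
  ∀ p ∈ a, (p.sign = 1 ∨ p.sign = -1) ∧
    (a.filter (fun q => q.id == p.id && q.isOver)).length = 1 ∧
    (a.filter (fun q => q.id == p.id && !q.isOver)).length = 1 ∧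
    (∀ q ∈ a, q.id = p.id → q.sign = p.sign)

/-- The canonical affine label of the arc entering the `k`-th passage
(base label `0` on the arc entering the `0`-th passage). -/
def labelAt (a : KCode) (k : ℕ) : ℤ := ((a.take k).map Passage.inc).sum

/-- Position of the over-passage of crossing `i`. -/
def overPos (a : KCode) (i : ℕ) : ℕ := a.findIdx (fun p => p.id == i && p.isOver)

/-- Position of the under-passage of crossing `i`. -/
def underPos (a : KCode) (i : ℕ) : ℕ := a.findIdx (fun p => p.id == i && !p.isOver)

/-- The sign of crossing `i`. -/
def sgn (a : KCode) (i : ℕ) : ℤ :=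
  ((a.find? (fun p => p.id == i)).map Passage.sign).getD 0

/-- The weight `W_K(c)` of a crossing `c`: with incoming labels `a` (left) and
`b` (right) it is `W₊ = a - b - 1` if `sgn c = 1` and `W₋ = b - a + 1` if
`sgn c = -1`; equivalently it is
(label entering the over-passage) − (label entering the under-passage) − sign. -/
def wt (a : KCode) (i : ℕ) : ℤ :=
  labelAt a (overPos a i) - labelAt a (underPos a i) - sgn a i

/-- The affine index polynomial `P_K(t) = ∑_c sgn(c) (t^{W_K(c)} - 1)`. -/
noncomputable def affP (a : KCode) : LaurentPolynomial ℤ :=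
  ((crossIds a).map (fun i => (C (sgn a i)) * (T (wt a i) - 1))).sum

/-- The signed crossing count `wr_n(K) = ∑_{c : W_K(c) = n} sgn(c)`. -/
def wrn (a : KCode) (n : ℤ) : ℤ :=
  (((crossIds a).filter (fun i => wt a i == n)).map (sgn a)).sum

/-- A crossing is odd when it flanks an odd number of symbols of the Gauss
code, i.e. when the positions of its two passages differ by an even number. -/
def OddCross (a : KCode) (i : ℕ) : Bool := (overPos a i + underPos a i) % 2 == 0

/-- The odd writhe `J(K)`: the sum of the signs of the odd crossings. -/
def oddWrithe (a : KCode) : ℤ := (((crossIds a).filter (OddCross a)).map (sgn a)).sum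

/-- The reverse `K̄` of `K`: the same diagram with reversed orientation. -/
def reverseK (a : KCode) : KCode := a.reverse

/-- The (flat) mirror image `K*`: every classical crossing is switched, which
exchanges over- and under-passages and reverses all crossing signs. -/
def switchAll (a : KCode) : KCode := a.map (fun p => ⟨p.id, !p.isOver, -p.sign⟩)

/-- The vertical mirror image `K^!`: reflect the diagram in a plane
perpendicular to the plane of the diagram (which keeps the over/under data
and reverses all crossing signs) and reverse the orientation. -/
def vmirror (a : KCode) : KCode := (a.map (fun p => ⟨p.id, p.isOver, -p.sign⟩)).reverse

/-- Rename the crossings of a code by `f`. -/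
def relabel (f : ℕ → ℕ) (a : KCode) : KCode := a.map (fun p => { p with id := f p.id })

/-! ## Links -/

/-- A link code: a list of circle components. -/
abbrev LCode := List KCode

/-- Validity of a link code: the crossing data is globally consistent. -/
def ValidLink (L : LCode) : Prop := ValidK L.flatten

def crossIdsL (L : LCode) : List ℕ := crossIds L.flatten

def sgnL (L : LCode) (i : ℕ) : ℤ := sgn L.flatten i

/-- An affine (integer) labeling of the arcs of a link diagram:
`lab c k` is the label of the arc entering the `k`-th passage of the `c`-th
component; at each classical crossing with left incoming label `a` and right
incoming label `b`, the left outgoing label is `b+1` and the right outgoing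
label is `a-1`, i.e. passing through a passage changes the label by its
increment.  Labels are unchanged at virtual crossings. -/
def IsAffineLabeling (L : LCode) (lab : ℕ → ℕ → ℤ) : Prop :=
  ∀ c, c < L.length → ∀ k, k < (L.getD c []).length →
    lab c ((k + 1) % (L.getD c []).length) =
      lab c k + ((L.getD c []).getD k default).inc

/-- Locations `(component, position)` of the passages of crossing `i` that are
over-passages (`sel = true`) resp. under-passages (`sel = false`). -/
def locs (L : LCode) (i : ℕ) (sel : Bool) : List (ℕ × ℕ) :=
  (List.range L.length).flatMap (fun c =>
    (List.range (L.getD c []).length).filterMap (fun k =>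
      if ((L.getD c []).getD k default).id = i ∧ ((L.getD c []).getD k default).isOver = sel
      then some (c, k) else none))

/-- The weight of crossing `i` of a link diagram with affine labeling `lab`. -/
def wtL (L : LCode) (lab : ℕ → ℕ → ℤ) (i : ℕ) : ℤ :=
  lab ((locs L i true).headD (0, 0)).1 ((locs L i true).headD (0, 0)).2
    - lab ((locs L i false).headD (0, 0)).1 ((locs L i false).headD (0, 0)).2
    - sgnL L i

/-- The affine index polynomial of an affinely labeled link diagram. -/
noncomputable def affPL (L : LCode) (lab : ℕ → ℕ → ℤ) : LaurentPolynomial ℤ :=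
  ((crossIdsL L).map (fun i => (C (sgnL L i)) * (T (wtL L lab i) - 1))).sum

/-- The passages of component `c` whose partner passage lies on a different
component. -/
def crossPassages (L : LCode) (c : ℕ) : KCode :=
  (L.getD c []).filter (fun p =>
    ((L.getD c []).filter (fun q => q.id == p.id)).length == 1)

/-- The algebraic intersection number of component `c` with the union of the
other components: the signed count, in the plane, of the crossings of
component `c` with the other components (the strand crossing to the left
counts `+1`, to the right `−1`). -/
def algInt (L : LCode) (c : ℕ) : ℤ := ((crossPassages L c).map Passage.inc).sum

/-- A multi-component diagram is compatible when every component has algebraic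
intersection number zero with the union of the other components. -/
def Compatible (L : LCode) : Prop := ∀ c < L.length, algInt L c = 0

/-! ## Virtual isotopy

Link codes whose components carry an inert tracking label (a natural number);
the labels are preserved by isotopy and are used to follow components through
the births, deaths and saddles of a cobordism. -/

abbrev LLC := List (ℕ × KCode)

def plainL (L : LLC) : LCode := L.map Prod.snd

def idsOf (L : LLC) : List ℕ := crossIdsL (plainL L)

def pieceIds (L : LLC) : List ℕ := L.map Prod.fst

/-- `ReplC c c' segs segs'`: the circle `c'` is obtained from the circle `c`
by replacing, scanning from left to right, an initial batch of the listed
segments (`u` is replaced by `v` for each pair `(u, v)`), leaving `segs'`. -/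
inductive ReplC : KCode → KCode → List (KCode × KCode) → List (KCode × KCode) → Prop
  | nil (c : KCode) (segs : List (KCode × KCode)) : ReplC c c segs segs
  | cons {y y' : KCode} {segs segs' : List (KCode × KCode)} (x u v : KCode) :
      ReplC y y' segs segs' →
      ReplC (x ++ u ++ y) (x ++ v ++ y') ((u, v) :: segs) segs'

/-- `ReplL L L' segs`: the labeled link `L'` is obtained from `L` by
simultaneously performing all the listed segment replacements, in scanning
order. -/
inductive ReplL : LLC → LLC → List (KCode × KCode) → Prop
  | nil : ReplL [] [] []
  | cons {c c' : KCode} {L L' : LLC} {segs segs' : List (KCode × KCode)} (k : ℕ) :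
      ReplC c c' segs segs' → ReplL L L' segs' → ReplL ((k, c) :: L) ((k, c') :: L') segs

/-- `if b then [p, q] else [q, p]`. -/
def pairOf (b : Bool) (p q : Passage) : KCode := if b then [p, q] else [q, p]

/-- A generating move of oriented virtual isotopy on Gauss codes.  The
constructors `perm`, `rotate`, `rename` are inessential re-encodings; in
particular the virtual Reidemeister moves and the detour move leave the Gauss
code unchanged.  The constructors `r1`, `r2`, `r3` are the oriented classical
Reidemeister moves (`r1` and `r2` are stated as insertions; the inverse moves
are recovered by taking the symmetric closure). -/
inductive MoveStep : LLC → LLC → Prop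
  /-- re-ordering the components -/
  | perm {L L' : LLC} (h : L.Perm L') : MoveStep L L'
  /-- moving the base point of a component -/
  | rotate (k : ℕ) (x y : KCode) (L : LLC) :
      MoveStep ((k, x ++ y) :: L) ((k, y ++ x) :: L)
  /-- renaming the crossings injectively -/
  | rename {L : LLC} (f : ℕ → ℕ) (hf : Function.Injective f) :
      MoveStep L (L.map (fun c => (c.1, relabel f c.2)))
  /-- first Reidemeister move: insertion of a kink with a fresh crossing `i` -/
  | r1 {L L' : LLC} (i : ℕ) (o : Bool) (s : ℤ) (hs : s = 1 ∨ s = -1) (hi : i ∉ idsOf L)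
      (h : ReplL L L' [([], [⟨i, o, s⟩, ⟨i, !o, s⟩])]) : MoveStep L L'
  /-- second Reidemeister move: one strand slides across another, creating two
  fresh crossings `i, j` with opposite signs; `o` records whether the first
  strand passes over, `ord` the relative orientation of the strands. -/
  | r2 {L L' : LLC} (i j : ℕ) (o ord : Bool) (s : ℤ) (hs : s = 1 ∨ s = -1)
      (hij : i ≠ j) (hi : i ∉ idsOf L) (hj : j ∉ idsOf L)
      (h : ReplL L L'
        [([], [⟨i, o, s⟩, ⟨j, o, -s⟩]),
         ([], if ord then [⟨j, !o, -s⟩, ⟨i, !o, s⟩] else [⟨i, !o, s⟩, ⟨j, !o, -s⟩])]) :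
      MoveStep L L'
  /-- third Reidemeister move: a strand slides across a crossing.  Crossing
  `i` joins the top and the middle strand, `j` the top and the bottom strand,
  `k` the middle and the bottom strand; on each of the three strands the
  corresponding pair of adjacent passages is transposed.  The product of the
  three signs is `+1`, and the orders of the pairs along the strands are
  correlated with the signs as dictated by the orientations of the three
  strands (`t` records the order along the top strand). -/
  | r3 {L L' : LLC} (i j k : ℕ) (si sj sk : ℤ)
      (hsi : si = 1 ∨ si = -1) (hsj : sj = 1 ∨ sj = -1) (hsk : sk = 1 ∨ sk = -1)
      (hprod : si * sj * sk = 1)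
      (hij : i ≠ j) (hik : i ≠ k) (hjk : j ≠ k)
      (t : Bool) (segs : List (KCode × KCode))
      (hsegs : segs.Perm
        [(pairOf t ⟨i, true, si⟩ ⟨j, true, sj⟩,
          pairOf (!t) ⟨i, true, si⟩ ⟨j, true, sj⟩),
         (pairOf (t == (sj * sk == 1)) ⟨i, false, si⟩ ⟨k, true, sk⟩,
          pairOf (!(t == (sj * sk == 1))) ⟨i, false, si⟩ ⟨k, true, sk⟩),
         (pairOf (t == (si * sk == 1)) ⟨j, false, sj⟩ ⟨k, false, sk⟩,
          pairOf (!(t == (si * sk == 1))) ⟨j, false, sj⟩ ⟨k, false, sk⟩)])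
      (h : ReplL L L' segs) : MoveStep L L'

/-- Oriented virtual isotopy: the equivalence relation generated by the
classical Reidemeister moves, the virtual Reidemeister moves and the detour
move (the latter two being invisible on Gauss codes). -/
def Isotopic : LLC → LLC → Prop := Relation.EqvGen MoveStep

/-! ## Cobordism

A cobordism is a sequence of isotopies, births and deaths of unknotted
circles, and oriented saddle moves.  The schema of a cobordism is the abstract
surface it generates; we track its connected pieces through the component
labels, the genus of each piece, and the total genus of the pieces that have
been closed off, so that the genus of the schema is well defined. -/

/-- A state of a cobordism in progress: the current labeled link diagram (the
label of a circle names the surface piece it bounds), the genus of each piece,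
and the accumulated genus of closed-off pieces. -/
structure CobState where
  link : LLC
  genus : ℕ → ℕ
  closed : ℕ

/-- One step of a virtual cobordism. -/
inductive CobStep : CobState → CobState → Prop
  /-- a virtual isotopy move -/
  | isot {L L' : LLC} (g : ℕ → ℕ) (c : ℕ) (h : MoveStep L L') :
      CobStep ⟨L, g, c⟩ ⟨L', g, c⟩
  /-- birth of an unknotted circle, starting a fresh piece of genus `0` -/
  | birth (k : ℕ) (L : LLC) (g : ℕ → ℕ) (c : ℕ) (hk : k ∉ pieceIds L) :
      CobStep ⟨L, g, c⟩ ⟨(k, []) :: L, Function.update g k 0, c⟩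
  /-- death of an unknotted circle whose piece still has other boundary -/
  | death_keep (k : ℕ) (L : LLC) (g : ℕ → ℕ) (c : ℕ) (hk : k ∈ pieceIds L) :
      CobStep ⟨(k, []) :: L, g, c⟩ ⟨L, g, c⟩
  /-- death of an unknotted circle closing off its piece -/
  | death_close (k : ℕ) (L : LLC) (g : ℕ → ℕ) (c : ℕ) (hk : k ∉ pieceIds L) :
      CobStep ⟨(k, []) :: L, g, c⟩ ⟨L, g, c + g k⟩
  /-- oriented saddle splitting one circle into two (genus unchanged) -/
  | saddle_split (k : ℕ) (x y : KCode) (L : LLC) (g : ℕ → ℕ) (c : ℕ) :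
      CobStep ⟨(k, x ++ y) :: L, g, c⟩ ⟨(k, x) :: (k, y) :: L, g, c⟩
  /-- oriented saddle merging two boundary circles of the same piece
  (the genus of the piece increases by one) -/
  | saddle_merge_same (k : ℕ) (x y : KCode) (L : LLC) (g : ℕ → ℕ) (c : ℕ) :
      CobStep ⟨(k, x) :: (k, y) :: L, g, c⟩
        ⟨(k, x ++ y) :: L, Function.update g k (g k + 1), c⟩
  /-- oriented saddle merging boundary circles of two different pieces
  (the pieces merge and their genera add) -/
  | saddle_merge_diff (j k : ℕ) (x y : KCode) (L : LLC) (g : ℕ → ℕ) (c : ℕ)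
      (hjk : j ≠ k) :
      CobStep ⟨(j, x) :: (k, y) :: L, g, c⟩
        ⟨(j, x ++ y) :: (L.map fun p => if p.1 = k then (j, p.2) else p),
          Function.update (Function.update g j (g j + g k)) k 0, c⟩

/-- A virtual cobordism: a finite sequence of cobordism steps. -/
def Cob : CobState → CobState → Prop := Relation.ReflTransGen CobStep

/-- `L` and `L'` cobound a virtual cobordism (of some genus). -/
def Cobordant (L L' : LLC) : Prop :=
  ∃ g' c', Cob ⟨L, fun _ => 0, 0⟩ ⟨L', g', c'⟩

/-- The knot `a` bounds a virtual surface schema of genus `G`: there is a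
virtual cobordism from `a` to the empty link, and `G` is the total genus of
the pieces of its schema. -/
def BoundsGenus (a : KCode) (G : ℕ) : Prop :=
  ∃ g' : ℕ → ℕ, Cob ⟨[(0, a)], fun _ => 0, 0⟩ ⟨[], g', G⟩

/-! ## Concordance

A genus-zero cobordism (concordance) is one in which every critical point is
paired: each birth is paired with a canceling saddle and each death with a
canceling saddle.  An elementary concordance is a birth followed (after
isotopy) by a saddle amalgamating the born circle, or a saddle splitting off a
circle that (after isotopy) dies. -/

/-- One step of a concordance. -/
inductive ConcStep : LLC → LLC → Prop
  /-- a virtual isotopy -/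
  | isot {L L' : LLC} (h : Isotopic L L') : ConcStep L L'
  /-- elementary concordance: birth of an unknotted circle (tracked by the
  fresh label `k`), isotopy, then an oriented saddle amalgamating the born
  circle with another component -/
  | birth_saddle {L rest : LLC} (j k : ℕ) (x y : KCode)
      (hk : k ∉ pieceIds L)
      (h : Isotopic ((k, []) :: L) ((j, x) :: (k, y) :: rest)) :
      ConcStep L ((j, x ++ y) :: rest)
  /-- elementary concordance: an oriented saddle splitting off a circle
  (tracked by the fresh label `k`) which after isotopy is an unknotted,
  unlinked circle and dies -/
  | saddle_death {M rest : LLC} (j k : ℕ) (x y : KCode)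
      (hk : k ∉ pieceIds ((j, x ++ y) :: M))
      (h : Isotopic ((j, x) :: (k, y) :: M) ((k, []) :: rest)) :
      ConcStep ((j, x ++ y) :: M) rest

/-- Virtual concordance: genus-zero virtual cobordism. -/
def Concordant : LLC → LLC → Prop := Relation.EqvGen ConcStep

/-- Virtual concordance of knots. -/
def ConcordantK (a b : KCode) : Prop := Concordant [(0, a)] [(0, b)]

/-- The unknot: a circle with no classical crossings. -/
def unknotCode : KCode := []

/-- A virtual knot is (virtually) slice when it is virtually concordant to
the unknot. -/
def SliceK (a : KCode) : Prop := ConcordantK a unknotCode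

/-! ## Seifert circles and faces -/

/-- The position of the other passage of the crossing visited at position `k`. -/
def partnerIdx (a : KCode) (k : ℕ) : ℕ :=
  ((List.range a.length).filter
    (fun j => j != k && (a.getD j default).id == (a.getD k default).id)).headD 0

/-- Traversal of the diagram obtained by the oriented smoothing of every
classical crossing: from the arc entering passage `k+1` one exits along the
arc leaving the partner passage. -/
def seifNext (a : KCode) (k : ℕ) : ℕ := partnerIdx a ((k + 1) % a.length)

/-- A canonical representative of the Seifert circle through arc `k`. -/
def seifRep (a : KCode) (k : ℕ) : ℕ :=
  ((List.range a.length).map (fun t => (seifNext a)^[t] k)).foldr min k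

/-- The number of (virtual) Seifert circles: the number of cycles of the
oriented smoothing of all classical crossings.  A crossingless circle is a
single Seifert circle. -/
def seifertCount (a : KCode) : ℕ :=
  if a.length = 0 then 1 else ((List.range a.length).map (seifRep a)).dedup.length

/-- The counterclockwise-next edge-end around a crossing.  An edge-end is a
pair (position, isIn): the head (`isIn = true`) or the tail (`isIn = false`)
of an arc at the passage at that position. -/
def nextEnd (a : KCode) (e : ℕ × Bool) : ℕ × Bool :=
  let p := a.getD e.1 default
  (partnerIdx a e.1, if p.isOver == (p.sign == 1) then e.2 else !e.2)

/-- The edge-end at which a directed arc (a dart) arrives. -/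
def headEnd (a : KCode) (d : ℕ × Bool) : ℕ × Bool :=
  if d.2 then ((d.1 + 1) % a.length, true) else (d.1, false)

/-- The dart leaving along a given edge-end. -/
def dartFrom (a : KCode) (e : ℕ × Bool) : ℕ × Bool :=
  if e.2 then ((e.1 + a.length - 1) % a.length, false) else (e.1, true)

/-- The face-tracing successor of a dart. -/
def faceNext (a : KCode) (d : ℕ × Bool) : ℕ × Bool :=
  dartFrom a (nextEnd a (headEnd a d))

def encDart (d : ℕ × Bool) : ℕ := 2 * d.1 + (if d.2 then 1 else 0)

/-- A canonical representative of the face through a given dart. -/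
def faceRep (a : KCode) (d : ℕ × Bool) : ℕ :=
  ((List.range (2 * a.length)).map (fun t => encDart ((faceNext a)^[t] d))).foldr
    min (encDart d)

/-- The number of faces of the abstract (ribbon) diagram of a code. -/
def numFaces (a : KCode) : ℕ :=
  (((List.range a.length).flatMap (fun k => [(k, true), (k, false)])).map
    (faceRep a)).dedup.length

/-- A knot code is classical when its underlying abstract diagram is planar,
i.e. (by Euler's formula) when it has `n + 2` faces, `n` being the number of
crossings.  Classical knot diagrams are exactly the virtual knot diagrams
having a realization with no virtual crossings. -/
def IsClassical (a : KCode) : Prop := a = [] ∨ numFaces a = numCross a + 2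

/-! ## Flat diagrams -/

/-- A passage of a flat (no over/under information) virtual knot diagram:
`left = true` when the other strand crosses to the left, so that the affine
label increases by one. -/
structure FlatPassage where
  id : ℕ
  left : Bool
  deriving DecidableEq, Repr

instance : Inhabited FlatPassage := ⟨⟨0, false⟩⟩

/-- The label increment at a flat passage. -/
def FlatPassage.inc (p : FlatPassage) : ℤ := if p.left then 1 else -1

/-- A valid flat knot code: each crossing is traversed exactly twice, once
with increment `+1` and once with increment `-1`. -/
def ValidFlat (a : List FlatPassage) : Prop :=
  ∀ p ∈ a, (a.filter (fun q => q.id == p.id && q.left)).length = 1 ∧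
    (a.filter (fun q => q.id == p.id && !q.left)).length = 1

/-- An affine labeling of a flat knot diagram: `lab k` is the label of the arc
entering the `k`-th passage, and passing a crossing changes the label by the
increment of the passage. -/
def IsFlatLabeling (a : List FlatPassage) (lab : ℕ → ℤ) : Prop :=
  ∀ k, k < a.length → lab ((k + 1) % a.length) = lab k + (a.getD k default).inc

/-! ### Auxiliary lemmas for the proof of Statement 16 -/

namespace WrnInv

/-- Total increment of a code. -/
def S (a : KCode) : ℤ := (a.map Passage.inc).sum

@[simp] lemma S_nil : S [] = 0 := rfl

@[simp] lemma S_cons (p : Passage) (a : KCode) : S (p :: a) = p.inc + S a := by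
  simp [S]

@[simp] lemma S_append (x y : KCode) : S (x ++ y) = S x + S y := by
  simp [S]

@[simp] lemma labelAt_zero (a : KCode) : labelAt a 0 = 0 := by simp [labelAt]

lemma labelAt_append_le {x : KCode} (y : KCode) {k : ℕ} (hk : k ≤ x.length) :
    labelAt (x ++ y) k = labelAt x k := by
  simp [labelAt, List.take_append, Nat.sub_eq_zero_of_le hk]

lemma labelAt_append_add (x y : KCode) (k : ℕ) :
    labelAt (x ++ y) (x.length + k) = S x + labelAt y k := by
  simp [labelAt, List.take_append, S,
    List.take_of_length_le (show (x.map Passage.inc).length ≤ x.length + k by simp)]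

lemma findIdx_append_false {P : Passage → Bool} {x : KCode} (y : KCode)
    (h : ∀ q ∈ x, P q = false) :
    (x ++ y).findIdx P = x.length + (y.findIdx P) := by
  have hx : x.findIdx P = x.length := List.findIdx_eq_length.2 h
  rw [List.findIdx_append]
  simp [hx, Nat.add_comm]

lemma findIdx_append_found {P : Passage → Bool} {x : KCode} (y : KCode)
    (h : x.findIdx P < x.length) :
    (x ++ y).findIdx P = x.findIdx P := by
  rw [List.findIdx_append]; simp [h]

lemma find?_append_none {P : Passage → Bool} {x : KCode} (y : KCode)
    (h : ∀ q ∈ x, P q = false) :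
    (x ++ y).find? P = y.find? P := by
  rw [List.find?_append]
  have : x.find? P = none := List.find?_eq_none.2 (by intro q hq; simp [h q hq])
  simp [this]

lemma mem_crossIds {a : KCode} {i : ℕ} : i ∈ crossIds a ↔ ∃ q ∈ a, q.id = i := by
  simp [crossIds, List.mem_dedup]

lemma nodup_crossIds (a : KCode) : (crossIds a).Nodup := List.nodup_dedup _

/-- `sgn` of a valid code equals the sign of any passage with the given id. -/
lemma sgn_eq_of_mem {a : KCode} (ha : ValidK a) {q : Passage} (hq : q ∈ a) {i : ℕ}
    (hqi : q.id = i) : sgn a i = q.sign := by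
  have hsome : (a.find? (fun p => p.id == i)).isSome := by
    apply List.find?_isSome.2
    exact ⟨q, hq, by simp [hqi]⟩
  obtain ⟨r, hr⟩ := Option.isSome_iff_exists.1 hsome
  have hrmem : r ∈ a := List.mem_of_find?_eq_some hr
  have hrid : r.id = i := by simpa using List.find?_some hr
  have := (ha q hq).2.2.2 r hrmem (by rw [hrid, hqi])
  simp [sgn, hr, this]

/-- Validity is invariant under permutation. -/
lemma validK_perm {a b : KCode} (h : a.Perm b) (ha : ValidK a) : ValidK b := by
  intro p hp
  have hpa : p ∈ a := h.symm.subset hp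
  obtain ⟨h1, h2, h3, h4⟩ := ha p hpa
  refine ⟨h1, ?_, ?_, ?_⟩
  · rw [← (h.filter _).length_eq]; exact h2
  · rw [← (h.filter _).length_eq]; exact h3
  · intro q hq hqid; exact h4 q (h.symm.subset hq) hqid

lemma perm_shift (x u y : KCode) : (x ++ u ++ y).Perm (u ++ (x ++ y)) := by
  calc (x ++ u ++ y).Perm ((u ++ x) ++ y) := (List.perm_append_comm).append_right y
  _ = (u ++ (x ++ y)) := by simp

/-- Sum of increments of a valid code vanishes. -/
lemma S_eq_zero : ∀ N (a : KCode), a.length ≤ N → ValidK a → S a = 0 := by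
  intro N
  induction N with
  | zero => intro a ha _; rw [List.length_eq_zero_iff.1 (Nat.le_zero.1 ha)]; rfl
  | succ N ih =>
    intro a hlen hval
    match a with
    | [] => rfl
    | p :: rest =>
      -- find the partner of p in rest
      have hp : p ∈ p :: rest := by simp
      obtain ⟨hs, hov, hun, hcons⟩ := hval p hp
      -- the filter selecting passages with id p.id and isOver = !p.isOver
      set Q : Passage → Bool := fun q => q.id == p.id && (q.isOver == !p.isOver) with hQ
      have hQlen : ((p :: rest).filter Q).length = 1 := by
        cases hop : p.isOver
        · rw [show ((p :: rest).filter Q) =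
            ((p :: rest).filter (fun q => q.id == p.id && q.isOver)) from
              List.filter_congr (by intro q _; simp [hQ, hop])]
          exact hov
        · rw [show ((p :: rest).filter Q) =
            ((p :: rest).filter (fun q => q.id == p.id && !q.isOver)) from
              List.filter_congr (by intro q _; simp [hQ, hop])]
          exact hun
      obtain ⟨q, hq⟩ := List.length_eq_one_iff.1 hQlen
      have hqmem : q ∈ (p :: rest).filter Q := by rw [hq]; simp
      have hqmem' : q ∈ p :: rest := List.mem_of_mem_filter hqmem
      have hqQ : Q q = true := List.of_mem_filter hqmem
      have hqid : q.id = p.id := by simp [hQ] at hqQ; exact hqQ.1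
      have hqov : q.isOver = !p.isOver := by simp [hQ] at hqQ; exact hqQ.2
      have hqne : q ≠ p := by intro h; rw [h] at hqov; simp at hqov
      have hqrest : q ∈ rest := by
        rcases List.mem_cons.1 hqmem' with h | h
        · exact absurd h hqne
        · exact h
      -- a ~ p :: q :: t
      have hperm : (p :: rest).Perm (p :: q :: rest.erase q) :=
        List.Perm.cons p (List.perm_cons_erase hqrest)
      have hvalt : ValidK (p :: q :: rest.erase q) := validK_perm hperm hval
      set t := rest.erase q with ht
      -- no element of t has id p.id
      have hnot : ∀ r ∈ t, r.id ≠ p.id := by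
        intro r hr hrid
        -- r contributes to one of the two filters of p :: q :: t, making it too long
        have hovt : ((p :: q :: t).filter (fun s => s.id == p.id && s.isOver)).length = 1 := by
          rw [(hperm.filter _).length_eq] at hov; exact hov
        have hunt : ((p :: q :: t).filter (fun s => s.id == p.id && !s.isOver)).length = 1 := by
          rw [(hperm.filter _).length_eq] at hun; exact hun
        have hsplit : ∀ P : Passage → Bool, ((p :: q :: t).filter P).length =
            ((p :: q :: []).filter P).length + (t.filter P).length := by
          intro P
          have : (p :: q :: t) = [p, q] ++ t := rfl
          rw [this, List.filter_append, List.length_append]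
        cases hro : r.isOver
        · -- r is an under passage with id p.id; so is one of p, q
          have h1 : r ∈ t.filter (fun s => s.id == p.id && !s.isOver) :=
            List.mem_filter.2 ⟨hr, by simp [hrid, hro]⟩
          have h2 : (([p, q]).filter (fun s => s.id == p.id && !s.isOver)).length ≥ 1 := by
            cases hop : p.isOver
            · have : p ∈ ([p, q]).filter (fun s => s.id == p.id && !s.isOver) :=
                List.mem_filter.2 ⟨by simp, by simp [hop]⟩
              exact List.length_pos_iff.2 (List.ne_nil_of_mem this)
            · have : q ∈ ([p, q]).filter (fun s => s.id == p.id && !s.isOver) :=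
                List.mem_filter.2 ⟨by simp, by simp [hqid, hqov, hop]⟩
              exact List.length_pos_iff.2 (List.ne_nil_of_mem this)
          have h3 := hsplit (fun s => s.id == p.id && !s.isOver)
          have h4 : (t.filter (fun s => s.id == p.id && !s.isOver)).length ≥ 1 :=
            List.length_pos_iff.2 (List.ne_nil_of_mem h1)
          omega
        · have h1 : r ∈ t.filter (fun s => s.id == p.id && s.isOver) :=
            List.mem_filter.2 ⟨hr, by simp [hrid, hro]⟩
          have h2 : (([p, q]).filter (fun s => s.id == p.id && s.isOver)).length ≥ 1 := by
            cases hop : p.isOver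
            · have : q ∈ ([p, q]).filter (fun s => s.id == p.id && s.isOver) :=
                List.mem_filter.2 ⟨by simp, by simp [hqid, hqov, hop]⟩
              exact List.length_pos_iff.2 (List.ne_nil_of_mem this)
            · have : p ∈ ([p, q]).filter (fun s => s.id == p.id && s.isOver) :=
                List.mem_filter.2 ⟨by simp, by simp [hop]⟩
              exact List.length_pos_iff.2 (List.ne_nil_of_mem this)
          have h3 := hsplit (fun s => s.id == p.id && s.isOver)
          have h4 : (t.filter (fun s => s.id == p.id && s.isOver)).length ≥ 1 :=
            List.length_pos_iff.2 (List.ne_nil_of_mem h1)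
          omega
      -- t is valid
      have hvt : ValidK t := by
        intro r hr
        have hrmem : r ∈ p :: q :: t := by simp [hr]
        obtain ⟨h1, h2, h3, h4⟩ := hvalt r hrmem
        have hne1 : (p.id == r.id) = false := by
          simp only [beq_eq_false_iff_ne, ne_eq]
          intro h; exact hnot r hr h.symm
        have hne2 : (q.id == r.id) = false := by
          simp only [beq_eq_false_iff_ne, ne_eq, hqid]
          intro h; exact hnot r hr h.symm
        refine ⟨h1, ?_, ?_, ?_⟩
        · simpa [List.filter_cons, hne1, hne2] using h2
        · simpa [List.filter_cons, hne1, hne2] using h3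
        · intro s hs hsid; exact h4 s (by simp [hs]) hsid
      -- conclude
      have hlt : t.length ≤ N := by
        have h1 : t.length < rest.length + 1 := by
          have := List.length_erase_of_mem hqrest
          rw [ht, this]
          have : 0 < rest.length := List.length_pos_iff.2 (List.ne_nil_of_mem hqrest)
          omega
        simp only [List.length_cons] at hlen
        omega
      have hSt : S t = 0 := ih t hlt hvt
      have hSp : S (p :: rest) = S (p :: q :: t) := by
        simp [S]
        have := (hperm.map Passage.inc).sum_eq
        simpa [S] using this
      have hincq : q.inc = -p.inc := by
        have hsg : q.sign = p.sign := hcons q hqmem' hqid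
        simp [Passage.inc, hqov, hsg]
        cases p.isOver <;> simp
      rw [hSp]
      simp [hincq, hSt]

lemma findIdx_le_len (P : Passage → Bool) (x : KCode) : x.findIdx P ≤ x.length :=
  List.findIdx_le_length (p := P)

lemma lab_find_ins {P : Passage → Bool} (x u y : KCode)
    (hu : ∀ q ∈ u, P q = false) (hSu : S u = 0) :
    labelAt (x ++ u ++ y) ((x ++ u ++ y).findIdx P) =
      labelAt (x ++ y) ((x ++ y).findIdx P) := by
  rw [List.append_assoc]
  by_cases h : x.findIdx P < x.length
  · rw [findIdx_append_found _ h, findIdx_append_found _ h,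
      labelAt_append_le _ (le_of_lt h), labelAt_append_le _ (le_of_lt h)]
  · have hx : ∀ q ∈ x, P q = false :=
      List.findIdx_eq_length.1 (le_antisymm (findIdx_le_len P x) (not_lt.1 h))
    rw [findIdx_append_false _ hx, findIdx_append_false _ hx,
      findIdx_append_false _ hu, labelAt_append_add, labelAt_append_add,
      labelAt_append_add, hSu]
    ring

lemma find?_ins {P : Passage → Bool} (x u y : KCode) (hu : ∀ q ∈ u, P q = false) :
    (x ++ u ++ y).find? P = (x ++ y).find? P := by
  rw [List.append_assoc, List.find?_append, find?_append_none _ hu, List.find?_append]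

lemma wt_ins {i : ℕ} (x u y : KCode) (hu : ∀ q ∈ u, q.id ≠ i) (hSu : S u = 0) :
    wt (x ++ u ++ y) i = wt (x ++ y) i := by
  have h1 : ∀ q ∈ u, (fun p : Passage => p.id == i && p.isOver) q = false := by
    intro q hq; simp [hu q hq]
  have h2 : ∀ q ∈ u, (fun p : Passage => p.id == i && !p.isOver) q = false := by
    intro q hq; simp [hu q hq]
  have h3 : ∀ q ∈ u, (fun p : Passage => p.id == i) q = false := by
    intro q hq; simp [hu q hq]
  unfold wt overPos underPos sgn
  rw [lab_find_ins x u y h1 hSu, lab_find_ins x u y h2 hSu, find?_ins x u y h3]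

lemma sgn_ins {i : ℕ} (x u y : KCode) (hu : ∀ q ∈ u, q.id ≠ i) :
    sgn (x ++ u ++ y) i = sgn (x ++ y) i := by
  have h3 : ∀ q ∈ u, (fun p : Passage => p.id == i) q = false := by
    intro q hq; simp [hu q hq]
  unfold sgn
  rw [find?_ins x u y h3]

/-- Sum of signs over a list of crossing ids with weight `n`. -/
def wsum (b : KCode) (n : ℤ) (l : List ℕ) : ℤ :=
  ((l.filter (fun i => wt b i == n)).map (sgn b)).sum

lemma wrn_eq_wsum (b : KCode) (n : ℤ) : wrn b n = wsum b n (crossIds b) := rfl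

lemma wsum_perm (b : KCode) (n : ℤ) {l l' : List ℕ} (h : l.Perm l') :
    wsum b n l = wsum b n l' := ((h.filter _).map _).sum_eq

lemma wsum_congr {a b : KCode} {n : ℤ} {l : List ℕ}
    (hwt : ∀ i ∈ l, wt a i = wt b i) (hsg : ∀ i ∈ l, sgn a i = sgn b i) :
    wsum a n l = wsum b n l := by
  unfold wsum
  rw [List.filter_congr (fun i hi => by rw [hwt i hi])]
  congr 1
  apply List.map_congr_left
  intro i hi
  exact hsg i (List.mem_of_mem_filter hi)

lemma wsum_cons (b : KCode) (n : ℤ) (i : ℕ) (l : List ℕ) :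
    wsum b n (i :: l) = (if wt b i = n then sgn b i else 0) + wsum b n l := by
  unfold wsum
  rw [List.filter_cons]
  by_cases h : wt b i = n <;> simp [h]

lemma crossIds_perm_of (b : KCode) (l : List ℕ) (hnd : l.Nodup)
    (hmem : ∀ m, m ∈ crossIds b ↔ m ∈ l) : (crossIds b).Perm l :=
  (List.perm_ext_iff_of_nodup (nodup_crossIds b) hnd).2 hmem

lemma filter_id_nil {l : KCode} {m : ℕ} (h : ∀ q ∈ l, q.id ≠ m) (f : Passage → Bool) :
    l.filter (fun q => q.id == m && f q) = [] :=
  List.filter_eq_nil_iff.2 (fun q hq => by simp [h q hq])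

lemma validK_disjoint_append {u w : KCode} (hu : ValidK u)
    (hdis : ∀ p ∈ u, ∀ q ∈ w, p.id ≠ q.id) : ValidK (u ++ w) ↔ ValidK w := by
  constructor
  · intro h p hp
    obtain ⟨h1, h2, h3, h4⟩ := h p (by simp [hp])
    have hnil : ∀ f : Passage → Bool, u.filter (fun q => q.id == p.id && f q) = [] :=
      fun f => filter_id_nil (fun q hq => hdis q hq p hp) f
    rw [List.filter_append, hnil, List.nil_append] at h2
    rw [List.filter_append, hnil, List.nil_append] at h3
    exact ⟨h1, h2, h3, fun q hq hqid => h4 q (by simp [hq]) hqid⟩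
  · intro h p hp
    rcases List.mem_append.1 hp with hpu | hpw
    · obtain ⟨h1, h2, h3, h4⟩ := hu p hpu
      have hnil : ∀ f : Passage → Bool, w.filter (fun q => q.id == p.id && f q) = [] :=
        fun f => filter_id_nil (fun q hq hh => (hdis p hpu q hq) hh.symm) f
      refine ⟨h1, ?_, ?_, ?_⟩
      · rw [List.filter_append, hnil, List.append_nil]; exact h2
      · rw [List.filter_append, hnil, List.append_nil]; exact h3
      · intro q hq hqid
        rcases List.mem_append.1 hq with hqu | hqw
        · exact h4 q hqu hqid
        · exact absurd hqid.symm (hdis p hpu q hqw)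
    · obtain ⟨h1, h2, h3, h4⟩ := h p hpw
      have hnil : ∀ f : Passage → Bool, u.filter (fun q => q.id == p.id && f q) = [] :=
        fun f => filter_id_nil (fun q hq => hdis q hq p hpw) f
      refine ⟨h1, ?_, ?_, ?_⟩
      · rw [List.filter_append, hnil, List.nil_append]; exact h2
      · rw [List.filter_append, hnil, List.nil_append]; exact h3
      · intro q hq hqid
        rcases List.mem_append.1 hq with hqu | hqw
        · exact absurd hqid (hdis q hqu p hpw)
        · exact h4 q hqw hqid

/-! #### Rotation -/

lemma lab_find_rot {P : Passage → Bool} (x y : KCode)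
    (hlen : ((x ++ y).filter P).length = 1) (hS : S x + S y = 0) :
    labelAt (y ++ x) ((y ++ x).findIdx P) =
      labelAt (x ++ y) ((x ++ y).findIdx P) + S y := by
  rw [List.filter_append, List.length_append] at hlen
  by_cases hx : (x.filter P).length = 1
  · have hy : (y.filter P).length = 0 := by omega
    have hyf : ∀ q ∈ y, P q = false := by
      intro q hq
      have := List.length_eq_zero_iff.1 hy
      by_contra hPq
      have : q ∈ y.filter P := List.mem_filter.2 ⟨hq, by simpa using hPq⟩
      simp [List.length_eq_zero_iff.1 hy] at this
    have hfound : x.findIdx P < x.length := by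
      apply List.findIdx_lt_length_of_exists
      have : x.filter P ≠ [] := by intro h; rw [h] at hx; simp at hx
      obtain ⟨q, hq⟩ := List.exists_mem_of_ne_nil _ this
      exact ⟨q, List.mem_of_mem_filter hq, List.of_mem_filter hq⟩
    rw [findIdx_append_found _ hfound, findIdx_append_false _ hyf,
      labelAt_append_le _ (le_of_lt hfound), labelAt_append_add]
    ring
  · have hx0 : (x.filter P).length = 0 := by omega
    have hy : (y.filter P).length = 1 := by omega
    have hxf : ∀ q ∈ x, P q = false := by
      intro q hq
      by_contra hPq
      have : q ∈ x.filter P := List.mem_filter.2 ⟨hq, by simpa using hPq⟩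
      simp [List.length_eq_zero_iff.1 hx0] at this
    have hfound : y.findIdx P < y.length := by
      apply List.findIdx_lt_length_of_exists
      have : y.filter P ≠ [] := by intro h; rw [h] at hy; simp at hy
      obtain ⟨q, hq⟩ := List.exists_mem_of_ne_nil _ this
      exact ⟨q, List.mem_of_mem_filter hq, List.of_mem_filter hq⟩
    rw [findIdx_append_found _ hfound, findIdx_append_false _ hxf,
      labelAt_append_le _ (le_of_lt hfound), labelAt_append_add]
    omega

lemma filter_length_one_of_valid {a : KCode} (ha : ValidK a) {q : Passage} (hq : q ∈ a)
    {i : ℕ} (hqi : q.id = i) :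
    ((a.filter (fun p => p.id == i && p.isOver)).length = 1 ∧
     (a.filter (fun p => p.id == i && !p.isOver)).length = 1) := by
  obtain ⟨_, h2, h3, _⟩ := ha q hq
  subst hqi
  exact ⟨h2, h3⟩

lemma wt_rot {x y : KCode} (hval : ValidK (x ++ y)) {i : ℕ}
    (hi : ∃ q ∈ x ++ y, q.id = i) : wt (y ++ x) i = wt (x ++ y) i := by
  obtain ⟨q, hq, hqi⟩ := hi
  obtain ⟨hov, hun⟩ := filter_length_one_of_valid hval hq hqi
  have hS : S x + S y = 0 := by
    have := S_eq_zero (x ++ y).length (x ++ y) le_rfl hval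
    simpa using this
  have hsg : sgn (y ++ x) i = sgn (x ++ y) i := by
    rw [sgn_eq_of_mem hval hq hqi,
      sgn_eq_of_mem (validK_perm List.perm_append_comm hval) (List.perm_append_comm.subset hq) hqi]
  unfold wt overPos underPos
  rw [lab_find_rot x y hov hS, lab_find_rot x y hun hS, hsg]
  ring

/-! #### Swaps (for the third Reidemeister move) -/

lemma perm_swap_mid (A B : Passage) (x y : KCode) :
    (x ++ [A, B] ++ y).Perm (x ++ [B, A] ++ y) := by
  rw [List.append_assoc, List.append_assoc]
  exact (List.Perm.swap B A y).append_left x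

lemma lab_find_swap_none {P : Passage → Bool} {A B : Passage} (x y : KCode)
    (hA : P A = false) (hB : P B = false) :
    labelAt (x ++ [B, A] ++ y) ((x ++ [B, A] ++ y).findIdx P) =
      labelAt (x ++ [A, B] ++ y) ((x ++ [A, B] ++ y).findIdx P) := by
  rw [List.append_assoc, List.append_assoc]
  by_cases h : x.findIdx P < x.length
  · rw [findIdx_append_found _ h, findIdx_append_found _ h,
      labelAt_append_le _ (le_of_lt h), labelAt_append_le _ (le_of_lt h)]
  · have hx : ∀ q ∈ x, P q = false :=
      List.findIdx_eq_length.1 (le_antisymm (findIdx_le_len P x) (not_lt.1 h))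
    have hAB : ∀ q ∈ [A, B], P q = false := by
      intro q hq
      rcases List.mem_pair.1 hq with h|h <;> subst h <;> assumption
    have hBA : ∀ q ∈ [B, A], P q = false := by
      intro q hq
      rcases List.mem_pair.1 hq with h|h <;> subst h <;> assumption
    rw [findIdx_append_false _ hx, findIdx_append_false _ hx,
      findIdx_append_false _ hAB, findIdx_append_false _ hBA,
      labelAt_append_add, labelAt_append_add, labelAt_append_add, labelAt_append_add]
    simp [S]
    ring

lemma lab_find_swap_first {P : Passage → Bool} {A B : Passage} (x y : KCode)
    (hA : P A = true) (hB : P B = false)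
    (huniq : ((x ++ [A, B] ++ y).filter P).length = 1) :
    labelAt (x ++ [B, A] ++ y) ((x ++ [B, A] ++ y).findIdx P) =
      labelAt (x ++ [A, B] ++ y) ((x ++ [A, B] ++ y).findIdx P) + B.inc := by
  have hx : ∀ q ∈ x, P q = false := by
    rw [List.filter_append, List.filter_append, List.length_append, List.length_append] at huniq
    have hmid : (([A, B]).filter P).length = 1 := by simp [List.filter_cons, hA, hB]
    intro q hq
    by_contra hPq
    have : q ∈ x.filter P := List.mem_filter.2 ⟨hq, by simpa using hPq⟩
    have := List.length_pos_iff.2 (List.ne_nil_of_mem this)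
    omega
  rw [List.append_assoc, List.append_assoc, findIdx_append_false _ hx, findIdx_append_false _ hx]
  have h1 : ([A, B] ++ y).findIdx P = 0 := by simp [List.findIdx_cons, hA]
  have h2 : ([B, A] ++ y).findIdx P = 1 := by simp [List.findIdx_cons, hA, hB]
  rw [h1, h2, labelAt_append_add, labelAt_append_add]
  have e1 : labelAt ([A, B] ++ y) 0 = 0 := labelAt_zero _
  have e2 : labelAt ([B, A] ++ y) 1 = B.inc := by simp [labelAt]
  rw [e1, e2]
  ring

lemma lab_find_swap_second {P : Passage → Bool} {A B : Passage} (x y : KCode)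
    (hA : P A = false) (hB : P B = true)
    (huniq : ((x ++ [A, B] ++ y).filter P).length = 1) :
    labelAt (x ++ [B, A] ++ y) ((x ++ [B, A] ++ y).findIdx P) =
      labelAt (x ++ [A, B] ++ y) ((x ++ [A, B] ++ y).findIdx P) - A.inc := by
  have hx : ∀ q ∈ x, P q = false := by
    rw [List.filter_append, List.filter_append, List.length_append, List.length_append] at huniq
    have hmid : (([A, B]).filter P).length = 1 := by simp [List.filter_cons, hA, hB]
    intro q hq
    by_contra hPq
    have : q ∈ x.filter P := List.mem_filter.2 ⟨hq, by simpa using hPq⟩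
    have := List.length_pos_iff.2 (List.ne_nil_of_mem this)
    omega
  rw [List.append_assoc, List.append_assoc, findIdx_append_false _ hx, findIdx_append_false _ hx]
  have h1 : ([A, B] ++ y).findIdx P = 1 := by simp [List.findIdx_cons, hA, hB]
  have h2 : ([B, A] ++ y).findIdx P = 0 := by simp [List.findIdx_cons, hB]
  rw [h1, h2, labelAt_append_add, labelAt_append_add]
  have e1 : labelAt ([A, B] ++ y) 1 = A.inc := by simp [labelAt]
  have e2 : labelAt ([B, A] ++ y) 0 = 0 := labelAt_zero _
  rw [e1, e2]
  ring

/-- The change of the weight of crossing `i` under the swap `[A,B] → [B,A]`. -/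
def dsw2 (A B : Passage) (i : ℕ) : ℤ :=
  (if i = A.id then (if A.isOver then B.inc else -B.inc) else 0) +
  (if i = B.id then (if B.isOver then -A.inc else A.inc) else 0)

lemma wt_swap {A B : Passage} (hAB : A.id ≠ B.id) (x y : KCode)
    (hval : ValidK (x ++ [A, B] ++ y)) {i : ℕ}
    (hi : ∃ q ∈ x ++ [A, B] ++ y, q.id = i) :
    wt (x ++ [B, A] ++ y) i = wt (x ++ [A, B] ++ y) i + dsw2 A B i := by
  obtain ⟨q, hq, hqi⟩ := hi
  obtain ⟨hov, hun⟩ := filter_length_one_of_valid hval hq hqi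
  have hsg : sgn (x ++ [B, A] ++ y) i = sgn (x ++ [A, B] ++ y) i := by
    rw [sgn_eq_of_mem hval hq hqi,
      sgn_eq_of_mem (validK_perm (perm_swap_mid A B x y) hval)
        ((perm_swap_mid A B x y).subset hq) hqi]
  unfold wt overPos underPos
  set P : Passage → Bool := fun p => p.id == i && p.isOver with hP
  set Q : Passage → Bool := fun p => p.id == i && !p.isOver with hQ
  have hOver : labelAt (x ++ [B, A] ++ y) ((x ++ [B, A] ++ y).findIdx P) =
      labelAt (x ++ [A, B] ++ y) ((x ++ [A, B] ++ y).findIdx P) +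
      ((if i = A.id then (if A.isOver then B.inc else 0) else 0) +
       (if i = B.id then (if B.isOver then -A.inc else 0) else 0)) := by
    by_cases hiA : i = A.id
    · have hiB : i ≠ B.id := by rw [hiA]; exact hAB
      have hBf : P B = false := by simp [hP, Ne.symm hiB]
      cases hAo : A.isOver
      · have hAf : P A = false := by simp [hP, hAo]
        rw [lab_find_swap_none x y hAf hBf]
        simp [hiA, hiB, hAo, hAB]
      · have hAt : P A = true := by simp [hP, hiA, hAo]
        rw [lab_find_swap_first x y hAt hBf hov]
        simp [hiA, hiB, hAo, hAB]
    · by_cases hiB : i = B.id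
      · have hAf : P A = false := by simp [hP, Ne.symm hiA]
        cases hBo : B.isOver
        · have hBf : P B = false := by simp [hP, hBo]
          rw [lab_find_swap_none x y hAf hBf]
          simp [hiA, hiB, hBo, hAB, Ne.symm hAB]
        · have hBt : P B = true := by simp [hP, hiB, hBo]
          rw [lab_find_swap_second x y hAf hBt hov]
          simp [hiA, hiB, hBo, hAB, Ne.symm hAB]
          ring
      · have hAf : P A = false := by simp [hP, Ne.symm hiA]
        have hBf : P B = false := by simp [hP, Ne.symm hiB]
        rw [lab_find_swap_none x y hAf hBf]
        simp [hiA, hiB, hAB]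
  have hUnder : labelAt (x ++ [B, A] ++ y) ((x ++ [B, A] ++ y).findIdx Q) =
      labelAt (x ++ [A, B] ++ y) ((x ++ [A, B] ++ y).findIdx Q) +
      ((if i = A.id then (if A.isOver then 0 else B.inc) else 0) +
       (if i = B.id then (if B.isOver then 0 else -A.inc) else 0)) := by
    by_cases hiA : i = A.id
    · have hiB : i ≠ B.id := by rw [hiA]; exact hAB
      have hBf : Q B = false := by simp [hQ, Ne.symm hiB]
      cases hAo : A.isOver
      · have hAt : Q A = true := by simp [hQ, hiA, hAo]
        rw [lab_find_swap_first x y hAt hBf hun]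
        simp [hiA, hiB, hAo, hAB]
      · have hAf : Q A = false := by simp [hQ, hAo]
        rw [lab_find_swap_none x y hAf hBf]
        simp [hiA, hiB, hAo, hAB]
    · by_cases hiB : i = B.id
      · have hAf : Q A = false := by simp [hQ, Ne.symm hiA]
        cases hBo : B.isOver
        · have hBt : Q B = true := by simp [hQ, hiB, hBo]
          rw [lab_find_swap_second x y hAf hBt hun]
          simp [hiA, hiB, hBo, hAB, Ne.symm hAB]
          ring
        · have hBf : Q B = false := by simp [hQ, hBo]
          rw [lab_find_swap_none x y hAf hBf]
          simp [hiA, hiB, hBo, hAB, Ne.symm hAB]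
      · have hAf : Q A = false := by simp [hQ, Ne.symm hiA]
        have hBf : Q B = false := by simp [hQ, Ne.symm hiB]
        rw [lab_find_swap_none x y hAf hBf]
        simp [hiA, hiB, hAB]
  rw [hOver, hUnder, hsg, dsw2]
  split_ifs <;> ring

lemma replC_append_left {y y' : KCode} {segs segs' : List (KCode × KCode)}
    (h : ReplC y y' segs segs') (w : KCode) : ReplC (w ++ y) (w ++ y') segs segs' := by
  cases h with
  | nil c segs => exact ReplC.nil _ _
  | cons x u v h' =>
    have := ReplC.cons (w ++ x) u v h'
    simpa [List.append_assoc] using this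

def GoodPair (u v : KCode) : Prop := ∃ A B : Passage, A.id ≠ B.id ∧ u = [A, B] ∧ v = [B, A]

def dsw (u : KCode) (i : ℕ) : ℤ := dsw2 (u.getD 0 default) (u.getD 1 default) i

lemma master_swap : ∀ (ps : List (KCode × KCode)) (a b : KCode),
    (∀ q ∈ ps, GoodPair q.1 q.2) → ReplC a b ps [] → ValidK a →
    ValidK b ∧ a.Perm b ∧
      ∀ i, (∃ q ∈ a, q.id = i) →
        wt b i = wt a i + (ps.map (fun q => dsw q.1 i)).sum := by
  intro ps
  induction ps with
  | nil =>
    intro a b _ h hval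
    cases h
    exact ⟨hval, List.Perm.refl a, by simp⟩
  | cons p rest ih =>
    intro a b hgood h hval
    cases h with
    | cons x u v h' =>
      rename_i y y'
      obtain ⟨A, B, hAB, hu, hv⟩ := hgood (u, v) (by simp)
      subst hu hv
      have hpermac : (x ++ [A, B] ++ y).Perm (x ++ [B, A] ++ y) := perm_swap_mid A B x y
      have hvalc : ValidK (x ++ [B, A] ++ y) := validK_perm hpermac hval
      have hrepl : ReplC (x ++ [B, A] ++ y) (x ++ [B, A] ++ y') rest [] := by
        have := replC_append_left h' (x ++ [B, A])
        simpa [List.append_assoc] using this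
      obtain ⟨hvalb, hpermcb, hwtb⟩ :=
        ih (x ++ [B, A] ++ y) (x ++ [B, A] ++ y') (fun q hq => hgood q (by simp [hq]))
          hrepl hvalc
      refine ⟨hvalb, hpermac.trans hpermcb, ?_⟩
      intro i hi
      have hwc := wt_swap hAB x y hval hi
      have hic : ∃ q ∈ x ++ [B, A] ++ y, q.id = i := by
        obtain ⟨q, hq, hqi⟩ := hi
        exact ⟨q, hpermac.subset hq, hqi⟩
      rw [hwtb i hic, hwc]
      have : dsw [A, B] i = dsw2 A B i := by simp [dsw]
      simp only [List.map_cons, List.sum_cons, this]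
      ring

lemma replL_singleton_left {a : KCode} {L' : LLC} {segs : List (KCode × KCode)}
    (h : ReplL [(0, a)] L' segs) : ∃ b, L' = [(0, b)] ∧ ReplC a b segs [] := by
  cases h with
  | cons k hc hl => cases hl; exact ⟨_, rfl, hc⟩

lemma replL_singleton_right {b : KCode} {L : LLC} {segs : List (KCode × KCode)}
    (h : ReplL L [(0, b)] segs) : ∃ a, L = [(0, a)] ∧ ReplC a b segs [] := by
  cases h with
  | cons k hc hl => cases hl; exact ⟨_, rfl, hc⟩

lemma replC_one {c c' u v : KCode} (h : ReplC c c' [(u, v)] []) :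
    ∃ x y, c = x ++ u ++ y ∧ c' = x ++ v ++ y := by
  cases h with
  | cons x u v h' =>
    cases h'
    exact ⟨x, _, rfl, rfl⟩

lemma replC_two {c c' u1 v1 u2 v2 : KCode} (h : ReplC c c' [(u1, v1), (u2, v2)] []) :
    ∃ x z w, c = x ++ u1 ++ (z ++ u2 ++ w) ∧ c' = x ++ v1 ++ (z ++ v2 ++ w) := by
  cases h with
  | cons x u v h' =>
    cases h' with
    | cons z u2' v2' h'' =>
      cases h''
      exact ⟨x, z, _, rfl, rfl⟩

/-! #### Renaming -/

lemma findIdx_map' (p : Passage → Bool) (g : Passage → Passage) (l : List Passage) :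
    (l.map g).findIdx p = l.findIdx (fun q => p (g q)) := by
  induction l with
  | nil => rfl
  | cons a l ih => simp [List.findIdx_cons, ih]

lemma dedup_map_inj {f : ℕ → ℕ} (hf : Function.Injective f) (l : List ℕ) :
    (l.map f).dedup = l.dedup.map f := by
  induction l with
  | nil => rfl
  | cons a l ih =>
    by_cases h : a ∈ l
    · rw [List.map_cons, List.dedup_cons_of_mem (List.mem_map_of_mem (f := f) h),
        List.dedup_cons_of_mem h, ih]
    · rw [List.map_cons, List.dedup_cons_of_notMem, List.dedup_cons_of_notMem h,
        List.map_cons, ih]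
      intro hmem
      obtain ⟨b, hb, hba⟩ := List.mem_map.1 hmem
      exact h (hf hba ▸ hb)

lemma findIdx_congr {p q : Passage → Bool} (h : ∀ x, p x = q x) (l : KCode) :
    l.findIdx p = l.findIdx q :=
  congrArg (fun pr => List.findIdx pr l) (funext h)

lemma find?_congr {p q : Passage → Bool} (h : ∀ x, p x = q x) (l : KCode) :
    l.find? p = l.find? q :=
  congrArg (fun pr => List.find? pr l) (funext h)

lemma beq_f_eq {f : ℕ → ℕ} (hf : Function.Injective f) (u v : ℕ) :
    (f u == f v) = (u == v) := by
  by_cases h : u = v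
  · simp [h]
  · have h2 : ¬ f u = f v := fun hh => h (hf hh)
    simp [h, h2]

lemma labelAt_relabel (f : ℕ → ℕ) (a : KCode) (k : ℕ) :
    labelAt (relabel f a) k = labelAt a k := by
  unfold labelAt relabel
  rw [← List.map_take, List.map_map]
  rfl

lemma wt_relabel {f : ℕ → ℕ} (hf : Function.Injective f) (a : KCode) (i : ℕ) :
    wt (relabel f a) (f i) = wt a i := by
  have hov : overPos (relabel f a) (f i) = overPos a i := by
    unfold overPos relabel
    rw [findIdx_map']
    exact findIdx_congr (fun q => by simp only []; rw [beq_f_eq hf]) a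
  have hun : underPos (relabel f a) (f i) = underPos a i := by
    unfold underPos relabel
    rw [findIdx_map']
    exact findIdx_congr (fun q => by simp only []; rw [beq_f_eq hf]) a
  have hsg : sgn (relabel f a) (f i) = sgn a i := by
    unfold sgn relabel
    rw [List.find?_map]
    rw [find?_congr (p := (fun p : Passage => p.id == f i) ∘
        fun p : Passage => { p with id := f p.id })
      (q := fun q : Passage => q.id == i) (fun q => by simp only [Function.comp]; exact beq_f_eq hf q.id i) a]
    rw [Option.map_map]
    rfl
  unfold wt
  rw [hov, hun, hsg, labelAt_relabel, labelAt_relabel]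

lemma sgn_relabel {f : ℕ → ℕ} (hf : Function.Injective f) (a : KCode) (i : ℕ) :
    sgn (relabel f a) (f i) = sgn a i := by
  unfold sgn relabel
  rw [List.find?_map]
  rw [find?_congr (p := (fun p : Passage => p.id == f i) ∘
      fun p : Passage => { p with id := f p.id })
    (q := fun q : Passage => q.id == i) (fun q => by simp only [Function.comp]; exact beq_f_eq hf q.id i) a]
  rw [Option.map_map]
  rfl

lemma crossIds_relabel (f : ℕ → ℕ) (hf : Function.Injective f) (a : KCode) :
    crossIds (relabel f a) = (crossIds a).map f := by
  unfold crossIds relabel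
  rw [List.map_map]
  have : (Passage.id ∘ fun p : Passage => { p with id := f p.id }) = f ∘ Passage.id := rfl
  rw [this, ← List.map_map, dedup_map_inj hf]

lemma wrn_relabel {f : ℕ → ℕ} (hf : Function.Injective f) (a : KCode) (n : ℤ) :
    wrn (relabel f a) n = wrn a n := by
  rw [wrn_eq_wsum, crossIds_relabel f hf]
  unfold wsum
  rw [List.filter_map, List.map_map]
  have h1 : (List.filter ((fun i => wt (relabel f a) i == n) ∘ f) (crossIds a))
      = List.filter (fun i => wt a i == n) (crossIds a) := by
    apply List.filter_congr
    intro i _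
    simp [Function.comp, wt_relabel hf]
  rw [h1]
  have h2 : List.map (sgn (relabel f a) ∘ f) (List.filter (fun i => wt a i == n) (crossIds a))
      = List.map (sgn a) (List.filter (fun i => wt a i == n) (crossIds a)) := by
    apply List.map_congr_left
    intro i _
    simp [Function.comp, sgn_relabel hf]
  rw [h2]
  rfl

lemma validK_relabel_iff {f : ℕ → ℕ} (hf : Function.Injective f) (a : KCode) :
    ValidK (relabel f a) ↔ ValidK a := by
  set g : Passage → Passage := fun p => { p with id := f p.id } with hg
  have hfilter : ∀ (i : ℕ) (ov : Passage → Bool), (∀ p, ov (g p) = ov p) →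
      (relabel f a).filter (fun q => q.id == f i && ov q)
        = (a.filter (fun q => q.id == i && ov q)).map g := by
    intro i ov hov
    unfold relabel
    rw [List.filter_map]
    congr 1
    apply List.filter_congr
    intro q _
    simp only [Function.comp]
    rw [beq_f_eq hf, show ({ id := f q.id, isOver := q.isOver, sign := q.sign } : Passage) = g q from rfl, hov q]
  constructor
  · intro h p hp
    have hgp : g p ∈ relabel f a := List.mem_map_of_mem (f := g) hp
    obtain ⟨h1, h2, h3, h4⟩ := h (g p) hgp
    have e2 := hfilter p.id (fun q => q.isOver) (fun q => rfl)
    have e3 := hfilter p.id (fun q => !q.isOver) (fun q => rfl)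
    refine ⟨h1, ?_, ?_, ?_⟩
    · have : (g p).id = f p.id := rfl
      rw [this, e2, List.length_map] at h2
      exact h2
    · have : (g p).id = f p.id := rfl
      rw [this, e3, List.length_map] at h3
      exact h3
    · intro q hq hqid
      have : (g q).sign = (g p).sign :=
        h4 (g q) (List.mem_map_of_mem (f := g) hq) (by simp [hg, hqid])
      simpa [hg] using this
  · intro h p' hp'
    obtain ⟨p, hp, rfl⟩ := List.mem_map.1 hp'
    obtain ⟨h1, h2, h3, h4⟩ := h p hp
    have e2 := hfilter p.id (fun q => q.isOver) (fun q => rfl)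
    have e3 := hfilter p.id (fun q => !q.isOver) (fun q => rfl)
    refine ⟨h1, ?_, ?_, ?_⟩
    · show ((relabel f a).filter (fun q => q.id == f p.id && q.isOver)).length = 1
      rw [e2, List.length_map]; exact h2
    · show ((relabel f a).filter (fun q => q.id == f p.id && !q.isOver)).length = 1
      rw [e3, List.length_map]; exact h3
    · intro q' hq' hqid
      obtain ⟨q, hq, rfl⟩ := List.mem_map.1 hq'
      have : q.id = p.id := hf (by simpa [hg] using hqid)
      exact h4 q hq this

/-! #### Rotation, assembled -/

lemma validK_rot {x y : KCode} (h : ValidK (x ++ y)) : ValidK (y ++ x) :=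
  validK_perm List.perm_append_comm h

lemma wrn_rot (x y : KCode) (hval : ValidK (x ++ y)) (n : ℤ) :
    wrn (y ++ x) n = wrn (x ++ y) n := by
  have hperm : (crossIds (y ++ x)).Perm (crossIds (x ++ y)) :=
    ((List.perm_append_comm).map Passage.id).dedup
  rw [wrn_eq_wsum, wrn_eq_wsum, wsum_perm _ _ hperm]
  apply wsum_congr
  · intro i hi
    exact wt_rot hval (mem_crossIds.1 hi)
  · intro i hi
    obtain ⟨q, hq, hqi⟩ := mem_crossIds.1 hi
    rw [sgn_eq_of_mem (validK_rot hval) (List.perm_append_comm.subset hq) hqi,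
      sgn_eq_of_mem hval hq hqi]

/-! #### Position evaluation in codes with an inserted pair -/

lemma lab2_first {P : Passage → Bool} {p1 : Passage} (p2 : Passage) (x y : KCode)
    (hx : ∀ q ∈ x, P q = false) (h1 : P p1 = true) :
    labelAt (x ++ ([p1, p2] ++ y)) ((x ++ ([p1, p2] ++ y)).findIdx P) = S x := by
  rw [findIdx_append_false _ hx,
    show ([p1, p2] ++ y).findIdx P = 0 by simp [List.findIdx_cons, h1],
    labelAt_append_add]
  simp

lemma lab2_second {P : Passage → Bool} {p1 p2 : Passage} (x y : KCode)
    (hx : ∀ q ∈ x, P q = false) (h1 : P p1 = false) (h2 : P p2 = true) :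
    labelAt (x ++ ([p1, p2] ++ y)) ((x ++ ([p1, p2] ++ y)).findIdx P) = S x + p1.inc := by
  rw [findIdx_append_false _ hx,
    show ([p1, p2] ++ y).findIdx P = 1 by simp [List.findIdx_cons, h1, h2],
    labelAt_append_add]
  congr 1
  simp [labelAt]

lemma sgn2_first {i : ℕ} {p1 : Passage} (p2 : Passage) (x y : KCode)
    (hx : ∀ q ∈ x, q.id ≠ i) (h1 : p1.id = i) :
    sgn (x ++ ([p1, p2] ++ y)) i = p1.sign := by
  unfold sgn
  rw [find?_append_none _ (fun q hq => by simp [hx q hq])]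
  simp [List.find?_cons, h1]

lemma sgn2_second {i : ℕ} {p1 p2 : Passage} (x y : KCode)
    (hx : ∀ q ∈ x, q.id ≠ i) (h1 : p1.id ≠ i) (h2 : p2.id = i) :
    sgn (x ++ ([p1, p2] ++ y)) i = p2.sign := by
  unfold sgn
  rw [find?_append_none _ (fun q hq => by simp [hx q hq])]
  have e1 : (p1.id == i) = false := by simp [h1]
  simp [List.find?_cons, e1, h2]

/-! #### The first Reidemeister move -/

lemma validK_pair_kink (i : ℕ) (o : Bool) (s : ℤ) (hs : s = 1 ∨ s = -1) :
    ValidK [⟨i, o, s⟩, ⟨i, !o, s⟩] := by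
  intro p hp
  rcases List.mem_pair.1 hp with rfl | rfl <;>
    refine ⟨hs, ?_, ?_, ?_⟩ <;>
    cases o <;>
    simp [List.filter_cons] <;>
    (try intro q hq hq') <;>
    (try rcases List.mem_pair.1 hq with rfl | rfl) <;>
    simp_all

lemma r1_valid {i : ℕ} {o : Bool} {s : ℤ} (hs : s = 1 ∨ s = -1) (x y : KCode)
    (hfresh : ∀ q ∈ x ++ y, q.id ≠ i) :
    ValidK (x ++ [⟨i, o, s⟩, ⟨i, !o, s⟩] ++ y) ↔ ValidK (x ++ y) := by
  have hperm := perm_shift x [⟨i, o, s⟩, ⟨i, !o, s⟩] y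
  have h1 : ValidK (x ++ [⟨i, o, s⟩, ⟨i, !o, s⟩] ++ y) ↔
      ValidK ([⟨i, o, s⟩, ⟨i, !o, s⟩] ++ (x ++ y)) :=
    ⟨validK_perm hperm, validK_perm hperm.symm⟩
  rw [h1]
  apply validK_disjoint_append (validK_pair_kink i o s hs)
  intro p hp q hq
  rcases List.mem_pair.1 hp with rfl | rfl <;>
    exact fun h => hfresh q hq (by simp [← h])

lemma r1_wrn {i : ℕ} {o : Bool} {s : ℤ} (hs : s = 1 ∨ s = -1) (x y : KCode)
    (hfresh : ∀ q ∈ x ++ y, q.id ≠ i) (n : ℤ) (hn : n ≠ 0) :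
    wrn (x ++ [⟨i, o, s⟩, ⟨i, !o, s⟩] ++ y) n = wrn (x ++ y) n := by
  set P1 : Passage := ⟨i, o, s⟩ with hP1
  set P2 : Passage := ⟨i, !o, s⟩ with hP2
  set b : KCode := x ++ [P1, P2] ++ y with hb
  have hb' : b = x ++ ([P1, P2] ++ y) := by rw [hb, List.append_assoc]
  have hSu : S ([P1, P2] : KCode) = 0 := by cases o <;> simp [hP1, hP2, Passage.inc]
  have hxf : ∀ q ∈ x, q.id ≠ i := fun q hq => hfresh q (by simp [hq])
  -- the ids of b
  have hnotmem : i ∉ crossIds (x ++ y) := by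
    rw [mem_crossIds]
    rintro ⟨q, hq, hqi⟩
    exact hfresh q hq hqi
  have hidperm : (crossIds b).Perm (i :: crossIds (x ++ y)) := by
    apply crossIds_perm_of
    · exact List.nodup_cons.2 ⟨hnotmem, nodup_crossIds _⟩
    · intro m
      rw [mem_crossIds]
      constructor
      · rintro ⟨q, hq, hqi⟩
        rw [hb] at hq
        rcases List.mem_append.1 hq with hq' | hqy
        · rcases List.mem_append.1 hq' with hqx | hqu
          · exact List.mem_cons.2 (Or.inr (mem_crossIds.2 ⟨q, by simp [hqx], hqi⟩))
          · rcases List.mem_pair.1 hqu with rfl | rfl <;>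
              exact List.mem_cons.2 (Or.inl (by rw [← hqi]))
        · exact List.mem_cons.2 (Or.inr (mem_crossIds.2 ⟨q, by simp [hqy], hqi⟩))
      · intro hm
        rcases List.mem_cons.1 hm with rfl | hm'
        · exact ⟨P1, by rw [hb]; simp, rfl⟩
        · obtain ⟨q, hq, hqi⟩ := mem_crossIds.1 hm'
          exact ⟨q, by rw [hb]; rcases List.mem_append.1 hq with h | h <;> simp [h], hqi⟩
  -- the weight of the new crossing vanishes
  have hwt0 : wt b i = 0 := by
    unfold wt overPos underPos
    rw [hb']
    cases o
    · -- P1 under, P2 over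
      have hOx : ∀ q ∈ x, (fun p : Passage => p.id == i && p.isOver) q = false := by
        intro q hq; simp [hxf q hq]
      have hUx : ∀ q ∈ x, (fun p : Passage => p.id == i && !p.isOver) q = false := by
        intro q hq; simp [hxf q hq]
      rw [lab2_second x y hOx (by simp [hP1]) (by simp [hP2]),
        lab2_first P2 x y hUx (by simp [hP1]),
        show sgn (x ++ ([P1, P2] ++ y)) i = P1.sign from sgn2_first P2 x y hxf rfl]
      simp [hP1, Passage.inc]
    · have hOx : ∀ q ∈ x, (fun p : Passage => p.id == i && p.isOver) q = false := by
        intro q hq; simp [hxf q hq]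
      have hUx : ∀ q ∈ x, (fun p : Passage => p.id == i && !p.isOver) q = false := by
        intro q hq; simp [hxf q hq]
      rw [lab2_first P2 x y hOx (by simp [hP1]),
        lab2_second x y hUx (by simp [hP1]) (by simp [hP2]),
        show sgn (x ++ ([P1, P2] ++ y)) i = P1.sign from sgn2_first P2 x y hxf rfl]
      simp [hP1, Passage.inc]
  rw [wrn_eq_wsum, wsum_perm _ _ hidperm, wsum_cons, hwt0,
    if_neg (fun h => hn h.symm), zero_add, wrn_eq_wsum]
  apply wsum_congr
  · intro m hm
    have hmne : m ≠ i := fun h => hnotmem (h ▸ hm)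
    exact wt_ins x [P1, P2] y
      (fun q hq => by rcases List.mem_pair.1 hq with rfl | rfl <;> simp [hP1, hP2, Ne.symm hmne])
      hSu
  · intro m hm
    have hmne : m ≠ i := fun h => hnotmem (h ▸ hm)
    exact sgn_ins x [P1, P2] y
      (fun q hq => by rcases List.mem_pair.1 hq with rfl | rfl <;> simp [hP1, hP2, Ne.symm hmne])

/-! #### The second Reidemeister move -/

lemma r2_valid {i j : ℕ} {o ord : Bool} {s : ℤ} (hs : s = 1 ∨ s = -1) (hij : i ≠ j)
    (x z w : KCode)
    (hfi : ∀ q ∈ x ++ (z ++ w), q.id ≠ i) (hfj : ∀ q ∈ x ++ (z ++ w), q.id ≠ j) :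
    ValidK (x ++ [⟨i, o, s⟩, ⟨j, o, -s⟩] ++
      (z ++ (if ord then [⟨j, !o, -s⟩, ⟨i, !o, s⟩] else [⟨i, !o, s⟩, ⟨j, !o, -s⟩]) ++ w)) ↔
    ValidK (x ++ (z ++ w)) := by
  set Pi : Passage := ⟨i, o, s⟩
  set Pj : Passage := ⟨j, o, -s⟩
  set Qi : Passage := ⟨i, !o, s⟩
  set Qj : Passage := ⟨j, !o, -s⟩
  set v2 : KCode := if ord then [Qj, Qi] else [Qi, Qj] with hv2
  set a : KCode := x ++ (z ++ w) with ha
  set b : KCode := x ++ [Pi, Pj] ++ (z ++ v2 ++ w) with hbdef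
  have hchunk : ValidK ([Pi, Qi] ++ [Pj, Qj]) := by
    rw [validK_disjoint_append (validK_pair_kink i o s hs)
      (by intro p hp q hq;
          rcases List.mem_pair.1 hp with rfl | rfl <;>
          rcases List.mem_pair.1 hq with rfl | rfl <;> simpa using hij)]
    exact validK_pair_kink j o (-s) (by rcases hs with rfl | rfl <;> simp)
  have hpermchunk : ([Pi, Pj] ++ v2).Perm ([Pi, Qi] ++ [Pj, Qj]) := by
    cases ord <;> simp only [hv2, if_true, if_false, Bool.false_eq_true, reduceIte]
    · -- v2 = [Qi, Qj] : [Pi, Pj, Qi, Qj] ~ [Pi, Qi, Pj, Qj]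
      exact List.Perm.cons Pi (List.Perm.swap Qi Pj [Qj])
    · -- v2 = [Qj, Qi] : [Pi, Pj, Qj, Qi] ~ [Pi, Qi, Pj, Qj]
      exact List.Perm.cons Pi (List.perm_append_comm (l₁ := [Pj, Qj]) (l₂ := [Qi]))
  have s1 : b.Perm ([Pi, Pj] ++ (x ++ (z ++ v2 ++ w))) := perm_shift x [Pi, Pj] (z ++ v2 ++ w)
  have s2 : (x ++ (z ++ v2 ++ w)).Perm (v2 ++ a) := by
    have s2a : (x ++ (z ++ v2 ++ w)).Perm (x ++ (v2 ++ (z ++ w))) :=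
      (perm_shift z v2 w).append_left x
    have s2b : (x ++ (v2 ++ (z ++ w))).Perm (v2 ++ (x ++ (z ++ w))) := by
      rw [← List.append_assoc]; exact perm_shift x v2 (z ++ w)
    exact s2a.trans s2b
  have hpermb : b.Perm ((([Pi, Pj] ++ v2) ++ a)) :=
    (s1.trans (s2.append_left [Pi, Pj])).trans (by rw [List.append_assoc])
  have hpermb2 : b.Perm (([Pi, Qi] ++ [Pj, Qj]) ++ a) :=
    hpermb.trans (hpermchunk.append_right a)
  have hdisj : ∀ p ∈ [Pi, Qi] ++ [Pj, Qj], ∀ q ∈ a, p.id ≠ q.id := by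
    intro p hp q hq h
    have : p.id = i ∨ p.id = j := by
      rcases List.mem_append.1 hp with h' | h' <;> rcases List.mem_pair.1 h' with rfl | rfl <;>
        simp [Pi, Pj, Qi, Qj]
    rcases this with h' | h'
    · exact hfi q hq (h ▸ h' : q.id = i)
    · exact hfj q hq (h ▸ h' : q.id = j)
  exact ⟨fun h => (validK_disjoint_append hchunk hdisj).1 (validK_perm hpermb2 h),
    fun h => validK_perm hpermb2.symm ((validK_disjoint_append hchunk hdisj).2 h)⟩

lemma r2_tail {i j : ℕ} (hij : i ≠ j) (s : ℤ) (v1 v2 : KCode) (x z w : KCode) (n : ℤ)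
    (hfi : ∀ q ∈ x ++ (z ++ w), q.id ≠ i) (hfj : ∀ q ∈ x ++ (z ++ w), q.id ≠ j)
    (hv1ids : ∀ q ∈ v1, q.id = i ∨ q.id = j) (hv2ids : ∀ q ∈ v2, q.id = i ∨ q.id = j)
    (hSv1 : S v1 = 0) (hSv2 : S v2 = 0)
    (hwi : ∃ q ∈ v1, q.id = i) (hwj : ∃ q ∈ v1, q.id = j)
    (hsgni : sgn (x ++ v1 ++ (z ++ v2 ++ w)) i = s)
    (hsgnj : sgn (x ++ v1 ++ (z ++ v2 ++ w)) j = -s)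
    (hww : wt (x ++ v1 ++ (z ++ v2 ++ w)) i = wt (x ++ v1 ++ (z ++ v2 ++ w)) j) :
    wrn (x ++ v1 ++ (z ++ v2 ++ w)) n = wrn (x ++ (z ++ w)) n := by
  set a : KCode := x ++ (z ++ w) with ha
  set b : KCode := x ++ v1 ++ (z ++ v2 ++ w) with hb
  have hnoti : i ∉ crossIds a := by
    rw [mem_crossIds]; rintro ⟨q, hq, hqi⟩; exact hfi q hq hqi
  have hnotj : j ∉ crossIds a := by
    rw [mem_crossIds]; rintro ⟨q, hq, hqi⟩; exact hfj q hq hqi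
  have hmemb : ∀ q, q ∈ b ↔ (q ∈ v1 ∨ q ∈ v2) ∨ q ∈ a := by
    intro q
    rw [hb, ha]
    simp only [List.mem_append]
    tauto
  have hidperm : (crossIds b).Perm (i :: j :: crossIds a) := by
    apply crossIds_perm_of
    · exact List.nodup_cons.2 ⟨by simp [hnoti, hij],
        List.nodup_cons.2 ⟨hnotj, nodup_crossIds _⟩⟩
    · intro m
      rw [mem_crossIds]
      constructor
      · rintro ⟨q, hq, hqi⟩
        rcases (hmemb q).1 hq with hq' | hq'
        · rcases hq' with h' | h'
          · rcases hv1ids q h' with h | h <;> simp [← hqi, h]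
          · rcases hv2ids q h' with h | h <;> simp [← hqi, h]
        · simp only [List.mem_cons]
          exact Or.inr (Or.inr (mem_crossIds.2 ⟨q, hq', hqi⟩))
      · intro hm
        rcases List.mem_cons.1 hm with rfl | hm'
        · obtain ⟨q, hq, hqi⟩ := hwi
          exact ⟨q, (hmemb q).2 (Or.inl (Or.inl hq)), hqi⟩
        rcases List.mem_cons.1 hm' with rfl | hm''
        · obtain ⟨q, hq, hqi⟩ := hwj
          exact ⟨q, (hmemb q).2 (Or.inl (Or.inl hq)), hqi⟩
        · obtain ⟨q, hq, hqi⟩ := mem_crossIds.1 hm''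
          exact ⟨q, (hmemb q).2 (Or.inr hq), hqi⟩
  have htail : wsum b n (crossIds a) = wrn a n := by
    rw [wrn_eq_wsum]
    apply wsum_congr
    · intro m hm
      have hmi : m ≠ i := fun h => hnoti (h ▸ hm)
      have hmj : m ≠ j := fun h => hnotj (h ▸ hm)
      have hmid1 : ∀ q ∈ v1, q.id ≠ m := by
        intro q hq
        rcases hv1ids q hq with h | h <;> rw [h] <;> [exact Ne.symm hmi; exact Ne.symm hmj]
      have hmid2 : ∀ q ∈ v2, q.id ≠ m := by
        intro q hq
        rcases hv2ids q hq with h | h <;> rw [h] <;> [exact Ne.symm hmi; exact Ne.symm hmj]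
      have e1 : wt b m = wt (x ++ (z ++ v2 ++ w)) m := wt_ins x v1 _ hmid1 hSv1
      have e2 : x ++ (z ++ v2 ++ w) = (x ++ z) ++ v2 ++ w := by simp [List.append_assoc]
      have e3 : wt ((x ++ z) ++ v2 ++ w) m = wt ((x ++ z) ++ w) m := wt_ins (x ++ z) v2 w hmid2 hSv2
      rw [e1, e2, e3, ha, List.append_assoc]
    · intro m hm
      have hmi : m ≠ i := fun h => hnoti (h ▸ hm)
      have hmj : m ≠ j := fun h => hnotj (h ▸ hm)
      have hmid1 : ∀ q ∈ v1, q.id ≠ m := by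
        intro q hq
        rcases hv1ids q hq with h | h <;> rw [h] <;> [exact Ne.symm hmi; exact Ne.symm hmj]
      have hmid2 : ∀ q ∈ v2, q.id ≠ m := by
        intro q hq
        rcases hv2ids q hq with h | h <;> rw [h] <;> [exact Ne.symm hmi; exact Ne.symm hmj]
      have e1 : sgn b m = sgn (x ++ (z ++ v2 ++ w)) m := sgn_ins x v1 _ hmid1
      have e2 : x ++ (z ++ v2 ++ w) = (x ++ z) ++ v2 ++ w := by simp [List.append_assoc]
      have e3 : sgn ((x ++ z) ++ v2 ++ w) m = sgn ((x ++ z) ++ w) m := sgn_ins (x ++ z) v2 w hmid2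
      rw [e1, e2, e3, ha, List.append_assoc]
  rw [wrn_eq_wsum, wsum_perm _ _ hidperm, wsum_cons, wsum_cons, hsgni, hsgnj, hww, htail]
  split_ifs <;> ring

lemma r2_wrn {i j : ℕ} {o ord : Bool} {s : ℤ} (hij : i ≠ j)
    (x z w : KCode)
    (hfi : ∀ q ∈ x ++ (z ++ w), q.id ≠ i) (hfj : ∀ q ∈ x ++ (z ++ w), q.id ≠ j) (n : ℤ) :
    wrn (x ++ [⟨i, o, s⟩, ⟨j, o, -s⟩] ++
      (z ++ (if ord then [⟨j, !o, -s⟩, ⟨i, !o, s⟩] else [⟨i, !o, s⟩, ⟨j, !o, -s⟩]) ++ w)) n =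
    wrn (x ++ (z ++ w)) n := by
  cases o <;> cases ord <;> simp only [Bool.not_true, Bool.not_false]
  · rw [if_neg (by simp)]
    have hfx_i : ∀ q ∈ x, q.id ≠ i := fun q hq => hfi q (by simp [hq])
    have hfx_j : ∀ q ∈ x, q.id ≠ j := fun q hq => hfj q (by simp [hq])
    have hfz_i : ∀ q ∈ z, q.id ≠ i := fun q hq => hfi q (by simp [hq])
    have hfz_j : ∀ q ∈ z, q.id ≠ j := fun q hq => hfj q (by simp [hq])
    have eb1 : x ++ [(⟨i, false, s⟩ : Passage), (⟨j, false, -s⟩ : Passage)] ++ (z ++ [(⟨i, true, s⟩ : Passage), (⟨j, true, -s⟩ : Passage)] ++ w) = x ++ ([(⟨i, false, s⟩ : Passage), (⟨j, false, -s⟩ : Passage)] ++ (z ++ [(⟨i, true, s⟩ : Passage), (⟨j, true, -s⟩ : Passage)] ++ w)) := by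
      simp [List.append_assoc]
    have eb2 : x ++ [(⟨i, false, s⟩ : Passage), (⟨j, false, -s⟩ : Passage)] ++ (z ++ [(⟨i, true, s⟩ : Passage), (⟨j, true, -s⟩ : Passage)] ++ w) = (x ++ ([(⟨i, false, s⟩ : Passage), (⟨j, false, -s⟩ : Passage)] ++ z)) ++ ([(⟨i, true, s⟩ : Passage), (⟨j, true, -s⟩ : Passage)] ++ w) := by
      simp [List.append_assoc]
    have hxi : ∀ q ∈ x, (fun p : Passage => p.id == i && !p.isOver) q = false := fun q hq => by simp [hfx_i q hq]
    have hxj : ∀ q ∈ x, (fun p : Passage => p.id == j && !p.isOver) q = false := fun q hq => by simp [hfx_j q hq]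
    have hXi : ∀ q ∈ x ++ ([(⟨i, false, s⟩ : Passage), (⟨j, false, -s⟩ : Passage)] ++ z), (fun p : Passage => p.id == i && p.isOver) q = false := by
      intro q hq
      rcases List.mem_append.1 hq with h | h
      · simp [hfx_i q h]
      rcases List.mem_append.1 h with h | h
      · rcases List.mem_pair.1 h with rfl | rfl <;> simp [Ne.symm hij]
      · simp [hfz_i q h]
    have hXj : ∀ q ∈ x ++ ([(⟨i, false, s⟩ : Passage), (⟨j, false, -s⟩ : Passage)] ++ z), (fun p : Passage => p.id == j && p.isOver) q = false := by
      intro q hq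
      rcases List.mem_append.1 hq with h | h
      · simp [hfx_j q h]
      rcases List.mem_append.1 h with h | h
      · rcases List.mem_pair.1 h with rfl | rfl <;> simp [hij]
      · simp [hfz_j q h]
    have hsgni : sgn (x ++ [(⟨i, false, s⟩ : Passage), (⟨j, false, -s⟩ : Passage)] ++ (z ++ [(⟨i, true, s⟩ : Passage), (⟨j, true, -s⟩ : Passage)] ++ w)) i = s := by
      rw [eb1]; exact sgn2_first (⟨j, false, -s⟩ : Passage) x _ hfx_i rfl
    have hsgnj : sgn (x ++ [(⟨i, false, s⟩ : Passage), (⟨j, false, -s⟩ : Passage)] ++ (z ++ [(⟨i, true, s⟩ : Passage), (⟨j, true, -s⟩ : Passage)] ++ w)) j = -s := by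
      rw [eb1]; exact sgn2_second x _ hfx_j (by simpa using hij) rfl
    have hLvi : labelAt (x ++ [(⟨i, false, s⟩ : Passage), (⟨j, false, -s⟩ : Passage)] ++ (z ++ [(⟨i, true, s⟩ : Passage), (⟨j, true, -s⟩ : Passage)] ++ w)) (((x ++ [(⟨i, false, s⟩ : Passage), (⟨j, false, -s⟩ : Passage)] ++ (z ++ [(⟨i, true, s⟩ : Passage), (⟨j, true, -s⟩ : Passage)] ++ w))).findIdx (fun p : Passage => p.id == i && !p.isOver)) = S x := by
      rw [eb1]; exact lab2_first (⟨j, false, -s⟩ : Passage) x _ hxi (by simp)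
    have hLvj : labelAt (x ++ [(⟨i, false, s⟩ : Passage), (⟨j, false, -s⟩ : Passage)] ++ (z ++ [(⟨i, true, s⟩ : Passage), (⟨j, true, -s⟩ : Passage)] ++ w)) (((x ++ [(⟨i, false, s⟩ : Passage), (⟨j, false, -s⟩ : Passage)] ++ (z ++ [(⟨i, true, s⟩ : Passage), (⟨j, true, -s⟩ : Passage)] ++ w))).findIdx (fun p : Passage => p.id == j && !p.isOver)) = S x + Passage.inc (⟨i, false, s⟩ : Passage) := by
      rw [eb1]; exact lab2_second x _ hxj (by simp [hij]) (by simp)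
    have hLwi : labelAt (x ++ [(⟨i, false, s⟩ : Passage), (⟨j, false, -s⟩ : Passage)] ++ (z ++ [(⟨i, true, s⟩ : Passage), (⟨j, true, -s⟩ : Passage)] ++ w)) (((x ++ [(⟨i, false, s⟩ : Passage), (⟨j, false, -s⟩ : Passage)] ++ (z ++ [(⟨i, true, s⟩ : Passage), (⟨j, true, -s⟩ : Passage)] ++ w))).findIdx (fun p : Passage => p.id == i && p.isOver)) = S (x ++ ([(⟨i, false, s⟩ : Passage), (⟨j, false, -s⟩ : Passage)] ++ z)) := by
      rw [eb2]; exact lab2_first (⟨j, true, -s⟩ : Passage) _ w hXi (by simp)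
    have hLwj : labelAt (x ++ [(⟨i, false, s⟩ : Passage), (⟨j, false, -s⟩ : Passage)] ++ (z ++ [(⟨i, true, s⟩ : Passage), (⟨j, true, -s⟩ : Passage)] ++ w)) (((x ++ [(⟨i, false, s⟩ : Passage), (⟨j, false, -s⟩ : Passage)] ++ (z ++ [(⟨i, true, s⟩ : Passage), (⟨j, true, -s⟩ : Passage)] ++ w))).findIdx (fun p : Passage => p.id == j && p.isOver)) = S (x ++ ([(⟨i, false, s⟩ : Passage), (⟨j, false, -s⟩ : Passage)] ++ z)) + Passage.inc (⟨i, true, s⟩ : Passage) := by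
      rw [eb2]; exact lab2_second _ w hXj (by simp [hij]) (by simp)
    have hww : wt (x ++ [(⟨i, false, s⟩ : Passage), (⟨j, false, -s⟩ : Passage)] ++ (z ++ [(⟨i, true, s⟩ : Passage), (⟨j, true, -s⟩ : Passage)] ++ w)) i = wt (x ++ [(⟨i, false, s⟩ : Passage), (⟨j, false, -s⟩ : Passage)] ++ (z ++ [(⟨i, true, s⟩ : Passage), (⟨j, true, -s⟩ : Passage)] ++ w)) j := by
      unfold wt overPos underPos
      rw [hLwi, hLvi, hLwj, hLvj, hsgni, hsgnj]
      simp [S, Passage.inc]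
      ring
    exact r2_tail hij s [(⟨i, false, s⟩ : Passage), (⟨j, false, -s⟩ : Passage)] [(⟨i, true, s⟩ : Passage), (⟨j, true, -s⟩ : Passage)] x z w n hfi hfj
      (by intro q hq; rcases List.mem_pair.1 hq with rfl | rfl <;> simp)
      (by intro q hq; rcases List.mem_pair.1 hq with rfl | rfl <;> simp)
      (by simp [Passage.inc]) (by simp [Passage.inc])
      ⟨(⟨i, false, s⟩ : Passage), by simp, rfl⟩ ⟨(⟨j, false, -s⟩ : Passage), by simp, rfl⟩ hsgni hsgnj hww
  · rw [if_pos trivial]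
    have hfx_i : ∀ q ∈ x, q.id ≠ i := fun q hq => hfi q (by simp [hq])
    have hfx_j : ∀ q ∈ x, q.id ≠ j := fun q hq => hfj q (by simp [hq])
    have hfz_i : ∀ q ∈ z, q.id ≠ i := fun q hq => hfi q (by simp [hq])
    have hfz_j : ∀ q ∈ z, q.id ≠ j := fun q hq => hfj q (by simp [hq])
    have eb1 : x ++ [(⟨i, false, s⟩ : Passage), (⟨j, false, -s⟩ : Passage)] ++ (z ++ [(⟨j, true, -s⟩ : Passage), (⟨i, true, s⟩ : Passage)] ++ w) = x ++ ([(⟨i, false, s⟩ : Passage), (⟨j, false, -s⟩ : Passage)] ++ (z ++ [(⟨j, true, -s⟩ : Passage), (⟨i, true, s⟩ : Passage)] ++ w)) := by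
      simp [List.append_assoc]
    have eb2 : x ++ [(⟨i, false, s⟩ : Passage), (⟨j, false, -s⟩ : Passage)] ++ (z ++ [(⟨j, true, -s⟩ : Passage), (⟨i, true, s⟩ : Passage)] ++ w) = (x ++ ([(⟨i, false, s⟩ : Passage), (⟨j, false, -s⟩ : Passage)] ++ z)) ++ ([(⟨j, true, -s⟩ : Passage), (⟨i, true, s⟩ : Passage)] ++ w) := by
      simp [List.append_assoc]
    have hxi : ∀ q ∈ x, (fun p : Passage => p.id == i && !p.isOver) q = false := fun q hq => by simp [hfx_i q hq]
    have hxj : ∀ q ∈ x, (fun p : Passage => p.id == j && !p.isOver) q = false := fun q hq => by simp [hfx_j q hq]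
    have hXi : ∀ q ∈ x ++ ([(⟨i, false, s⟩ : Passage), (⟨j, false, -s⟩ : Passage)] ++ z), (fun p : Passage => p.id == i && p.isOver) q = false := by
      intro q hq
      rcases List.mem_append.1 hq with h | h
      · simp [hfx_i q h]
      rcases List.mem_append.1 h with h | h
      · rcases List.mem_pair.1 h with rfl | rfl <;> simp [Ne.symm hij]
      · simp [hfz_i q h]
    have hXj : ∀ q ∈ x ++ ([(⟨i, false, s⟩ : Passage), (⟨j, false, -s⟩ : Passage)] ++ z), (fun p : Passage => p.id == j && p.isOver) q = false := by
      intro q hq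
      rcases List.mem_append.1 hq with h | h
      · simp [hfx_j q h]
      rcases List.mem_append.1 h with h | h
      · rcases List.mem_pair.1 h with rfl | rfl <;> simp [hij]
      · simp [hfz_j q h]
    have hsgni : sgn (x ++ [(⟨i, false, s⟩ : Passage), (⟨j, false, -s⟩ : Passage)] ++ (z ++ [(⟨j, true, -s⟩ : Passage), (⟨i, true, s⟩ : Passage)] ++ w)) i = s := by
      rw [eb1]; exact sgn2_first (⟨j, false, -s⟩ : Passage) x _ hfx_i rfl
    have hsgnj : sgn (x ++ [(⟨i, false, s⟩ : Passage), (⟨j, false, -s⟩ : Passage)] ++ (z ++ [(⟨j, true, -s⟩ : Passage), (⟨i, true, s⟩ : Passage)] ++ w)) j = -s := by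
      rw [eb1]; exact sgn2_second x _ hfx_j (by simpa using hij) rfl
    have hLvi : labelAt (x ++ [(⟨i, false, s⟩ : Passage), (⟨j, false, -s⟩ : Passage)] ++ (z ++ [(⟨j, true, -s⟩ : Passage), (⟨i, true, s⟩ : Passage)] ++ w)) (((x ++ [(⟨i, false, s⟩ : Passage), (⟨j, false, -s⟩ : Passage)] ++ (z ++ [(⟨j, true, -s⟩ : Passage), (⟨i, true, s⟩ : Passage)] ++ w))).findIdx (fun p : Passage => p.id == i && !p.isOver)) = S x := by
      rw [eb1]; exact lab2_first (⟨j, false, -s⟩ : Passage) x _ hxi (by simp)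
    have hLvj : labelAt (x ++ [(⟨i, false, s⟩ : Passage), (⟨j, false, -s⟩ : Passage)] ++ (z ++ [(⟨j, true, -s⟩ : Passage), (⟨i, true, s⟩ : Passage)] ++ w)) (((x ++ [(⟨i, false, s⟩ : Passage), (⟨j, false, -s⟩ : Passage)] ++ (z ++ [(⟨j, true, -s⟩ : Passage), (⟨i, true, s⟩ : Passage)] ++ w))).findIdx (fun p : Passage => p.id == j && !p.isOver)) = S x + Passage.inc (⟨i, false, s⟩ : Passage) := by
      rw [eb1]; exact lab2_second x _ hxj (by simp [hij]) (by simp)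
    have hLwi : labelAt (x ++ [(⟨i, false, s⟩ : Passage), (⟨j, false, -s⟩ : Passage)] ++ (z ++ [(⟨j, true, -s⟩ : Passage), (⟨i, true, s⟩ : Passage)] ++ w)) (((x ++ [(⟨i, false, s⟩ : Passage), (⟨j, false, -s⟩ : Passage)] ++ (z ++ [(⟨j, true, -s⟩ : Passage), (⟨i, true, s⟩ : Passage)] ++ w))).findIdx (fun p : Passage => p.id == i && p.isOver)) = S (x ++ ([(⟨i, false, s⟩ : Passage), (⟨j, false, -s⟩ : Passage)] ++ z)) + Passage.inc (⟨j, true, -s⟩ : Passage) := by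
      rw [eb2]; exact lab2_second _ w hXi (by simp [Ne.symm hij]) (by simp)
    have hLwj : labelAt (x ++ [(⟨i, false, s⟩ : Passage), (⟨j, false, -s⟩ : Passage)] ++ (z ++ [(⟨j, true, -s⟩ : Passage), (⟨i, true, s⟩ : Passage)] ++ w)) (((x ++ [(⟨i, false, s⟩ : Passage), (⟨j, false, -s⟩ : Passage)] ++ (z ++ [(⟨j, true, -s⟩ : Passage), (⟨i, true, s⟩ : Passage)] ++ w))).findIdx (fun p : Passage => p.id == j && p.isOver)) = S (x ++ ([(⟨i, false, s⟩ : Passage), (⟨j, false, -s⟩ : Passage)] ++ z)) := by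
      rw [eb2]; exact lab2_first (⟨i, true, s⟩ : Passage) _ w hXj (by simp)
    have hww : wt (x ++ [(⟨i, false, s⟩ : Passage), (⟨j, false, -s⟩ : Passage)] ++ (z ++ [(⟨j, true, -s⟩ : Passage), (⟨i, true, s⟩ : Passage)] ++ w)) i = wt (x ++ [(⟨i, false, s⟩ : Passage), (⟨j, false, -s⟩ : Passage)] ++ (z ++ [(⟨j, true, -s⟩ : Passage), (⟨i, true, s⟩ : Passage)] ++ w)) j := by
      unfold wt overPos underPos
      rw [hLwi, hLvi, hLwj, hLvj, hsgni, hsgnj]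
      simp [S, Passage.inc]
      ring
    exact r2_tail hij s [(⟨i, false, s⟩ : Passage), (⟨j, false, -s⟩ : Passage)] [(⟨j, true, -s⟩ : Passage), (⟨i, true, s⟩ : Passage)] x z w n hfi hfj
      (by intro q hq; rcases List.mem_pair.1 hq with rfl | rfl <;> simp)
      (by intro q hq; rcases List.mem_pair.1 hq with rfl | rfl <;> simp)
      (by simp [Passage.inc]) (by simp [Passage.inc])
      ⟨(⟨i, false, s⟩ : Passage), by simp, rfl⟩ ⟨(⟨j, false, -s⟩ : Passage), by simp, rfl⟩ hsgni hsgnj hww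
  · rw [if_neg (by simp)]
    have hfx_i : ∀ q ∈ x, q.id ≠ i := fun q hq => hfi q (by simp [hq])
    have hfx_j : ∀ q ∈ x, q.id ≠ j := fun q hq => hfj q (by simp [hq])
    have hfz_i : ∀ q ∈ z, q.id ≠ i := fun q hq => hfi q (by simp [hq])
    have hfz_j : ∀ q ∈ z, q.id ≠ j := fun q hq => hfj q (by simp [hq])
    have eb1 : x ++ [(⟨i, true, s⟩ : Passage), (⟨j, true, -s⟩ : Passage)] ++ (z ++ [(⟨i, false, s⟩ : Passage), (⟨j, false, -s⟩ : Passage)] ++ w) = x ++ ([(⟨i, true, s⟩ : Passage), (⟨j, true, -s⟩ : Passage)] ++ (z ++ [(⟨i, false, s⟩ : Passage), (⟨j, false, -s⟩ : Passage)] ++ w)) := by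
      simp [List.append_assoc]
    have eb2 : x ++ [(⟨i, true, s⟩ : Passage), (⟨j, true, -s⟩ : Passage)] ++ (z ++ [(⟨i, false, s⟩ : Passage), (⟨j, false, -s⟩ : Passage)] ++ w) = (x ++ ([(⟨i, true, s⟩ : Passage), (⟨j, true, -s⟩ : Passage)] ++ z)) ++ ([(⟨i, false, s⟩ : Passage), (⟨j, false, -s⟩ : Passage)] ++ w) := by
      simp [List.append_assoc]
    have hxi : ∀ q ∈ x, (fun p : Passage => p.id == i && p.isOver) q = false := fun q hq => by simp [hfx_i q hq]
    have hxj : ∀ q ∈ x, (fun p : Passage => p.id == j && p.isOver) q = false := fun q hq => by simp [hfx_j q hq]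
    have hXi : ∀ q ∈ x ++ ([(⟨i, true, s⟩ : Passage), (⟨j, true, -s⟩ : Passage)] ++ z), (fun p : Passage => p.id == i && !p.isOver) q = false := by
      intro q hq
      rcases List.mem_append.1 hq with h | h
      · simp [hfx_i q h]
      rcases List.mem_append.1 h with h | h
      · rcases List.mem_pair.1 h with rfl | rfl <;> simp [Ne.symm hij]
      · simp [hfz_i q h]
    have hXj : ∀ q ∈ x ++ ([(⟨i, true, s⟩ : Passage), (⟨j, true, -s⟩ : Passage)] ++ z), (fun p : Passage => p.id == j && !p.isOver) q = false := by
      intro q hq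
      rcases List.mem_append.1 hq with h | h
      · simp [hfx_j q h]
      rcases List.mem_append.1 h with h | h
      · rcases List.mem_pair.1 h with rfl | rfl <;> simp [hij]
      · simp [hfz_j q h]
    have hsgni : sgn (x ++ [(⟨i, true, s⟩ : Passage), (⟨j, true, -s⟩ : Passage)] ++ (z ++ [(⟨i, false, s⟩ : Passage), (⟨j, false, -s⟩ : Passage)] ++ w)) i = s := by
      rw [eb1]; exact sgn2_first (⟨j, true, -s⟩ : Passage) x _ hfx_i rfl
    have hsgnj : sgn (x ++ [(⟨i, true, s⟩ : Passage), (⟨j, true, -s⟩ : Passage)] ++ (z ++ [(⟨i, false, s⟩ : Passage), (⟨j, false, -s⟩ : Passage)] ++ w)) j = -s := by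
      rw [eb1]; exact sgn2_second x _ hfx_j (by simpa using hij) rfl
    have hLvi : labelAt (x ++ [(⟨i, true, s⟩ : Passage), (⟨j, true, -s⟩ : Passage)] ++ (z ++ [(⟨i, false, s⟩ : Passage), (⟨j, false, -s⟩ : Passage)] ++ w)) (((x ++ [(⟨i, true, s⟩ : Passage), (⟨j, true, -s⟩ : Passage)] ++ (z ++ [(⟨i, false, s⟩ : Passage), (⟨j, false, -s⟩ : Passage)] ++ w))).findIdx (fun p : Passage => p.id == i && p.isOver)) = S x := by
      rw [eb1]; exact lab2_first (⟨j, true, -s⟩ : Passage) x _ hxi (by simp)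
    have hLvj : labelAt (x ++ [(⟨i, true, s⟩ : Passage), (⟨j, true, -s⟩ : Passage)] ++ (z ++ [(⟨i, false, s⟩ : Passage), (⟨j, false, -s⟩ : Passage)] ++ w)) (((x ++ [(⟨i, true, s⟩ : Passage), (⟨j, true, -s⟩ : Passage)] ++ (z ++ [(⟨i, false, s⟩ : Passage), (⟨j, false, -s⟩ : Passage)] ++ w))).findIdx (fun p : Passage => p.id == j && p.isOver)) = S x + Passage.inc (⟨i, true, s⟩ : Passage) := by
      rw [eb1]; exact lab2_second x _ hxj (by simp [hij]) (by simp)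
    have hLwi : labelAt (x ++ [(⟨i, true, s⟩ : Passage), (⟨j, true, -s⟩ : Passage)] ++ (z ++ [(⟨i, false, s⟩ : Passage), (⟨j, false, -s⟩ : Passage)] ++ w)) (((x ++ [(⟨i, true, s⟩ : Passage), (⟨j, true, -s⟩ : Passage)] ++ (z ++ [(⟨i, false, s⟩ : Passage), (⟨j, false, -s⟩ : Passage)] ++ w))).findIdx (fun p : Passage => p.id == i && !p.isOver)) = S (x ++ ([(⟨i, true, s⟩ : Passage), (⟨j, true, -s⟩ : Passage)] ++ z)) := by
      rw [eb2]; exact lab2_first (⟨j, false, -s⟩ : Passage) _ w hXi (by simp)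
    have hLwj : labelAt (x ++ [(⟨i, true, s⟩ : Passage), (⟨j, true, -s⟩ : Passage)] ++ (z ++ [(⟨i, false, s⟩ : Passage), (⟨j, false, -s⟩ : Passage)] ++ w)) (((x ++ [(⟨i, true, s⟩ : Passage), (⟨j, true, -s⟩ : Passage)] ++ (z ++ [(⟨i, false, s⟩ : Passage), (⟨j, false, -s⟩ : Passage)] ++ w))).findIdx (fun p : Passage => p.id == j && !p.isOver)) = S (x ++ ([(⟨i, true, s⟩ : Passage), (⟨j, true, -s⟩ : Passage)] ++ z)) + Passage.inc (⟨i, false, s⟩ : Passage) := by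
      rw [eb2]; exact lab2_second _ w hXj (by simp [hij]) (by simp)
    have hww : wt (x ++ [(⟨i, true, s⟩ : Passage), (⟨j, true, -s⟩ : Passage)] ++ (z ++ [(⟨i, false, s⟩ : Passage), (⟨j, false, -s⟩ : Passage)] ++ w)) i = wt (x ++ [(⟨i, true, s⟩ : Passage), (⟨j, true, -s⟩ : Passage)] ++ (z ++ [(⟨i, false, s⟩ : Passage), (⟨j, false, -s⟩ : Passage)] ++ w)) j := by
      unfold wt overPos underPos
      rw [hLvi, hLwi, hLvj, hLwj, hsgni, hsgnj]
      simp [S, Passage.inc]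
      ring
    exact r2_tail hij s [(⟨i, true, s⟩ : Passage), (⟨j, true, -s⟩ : Passage)] [(⟨i, false, s⟩ : Passage), (⟨j, false, -s⟩ : Passage)] x z w n hfi hfj
      (by intro q hq; rcases List.mem_pair.1 hq with rfl | rfl <;> simp)
      (by intro q hq; rcases List.mem_pair.1 hq with rfl | rfl <;> simp)
      (by simp [Passage.inc]) (by simp [Passage.inc])
      ⟨(⟨i, true, s⟩ : Passage), by simp, rfl⟩ ⟨(⟨j, true, -s⟩ : Passage), by simp, rfl⟩ hsgni hsgnj hww
  · rw [if_pos trivial]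
    have hfx_i : ∀ q ∈ x, q.id ≠ i := fun q hq => hfi q (by simp [hq])
    have hfx_j : ∀ q ∈ x, q.id ≠ j := fun q hq => hfj q (by simp [hq])
    have hfz_i : ∀ q ∈ z, q.id ≠ i := fun q hq => hfi q (by simp [hq])
    have hfz_j : ∀ q ∈ z, q.id ≠ j := fun q hq => hfj q (by simp [hq])
    have eb1 : x ++ [(⟨i, true, s⟩ : Passage), (⟨j, true, -s⟩ : Passage)] ++ (z ++ [(⟨j, false, -s⟩ : Passage), (⟨i, false, s⟩ : Passage)] ++ w) = x ++ ([(⟨i, true, s⟩ : Passage), (⟨j, true, -s⟩ : Passage)] ++ (z ++ [(⟨j, false, -s⟩ : Passage), (⟨i, false, s⟩ : Passage)] ++ w)) := by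
      simp [List.append_assoc]
    have eb2 : x ++ [(⟨i, true, s⟩ : Passage), (⟨j, true, -s⟩ : Passage)] ++ (z ++ [(⟨j, false, -s⟩ : Passage), (⟨i, false, s⟩ : Passage)] ++ w) = (x ++ ([(⟨i, true, s⟩ : Passage), (⟨j, true, -s⟩ : Passage)] ++ z)) ++ ([(⟨j, false, -s⟩ : Passage), (⟨i, false, s⟩ : Passage)] ++ w) := by
      simp [List.append_assoc]
    have hxi : ∀ q ∈ x, (fun p : Passage => p.id == i && p.isOver) q = false := fun q hq => by simp [hfx_i q hq]
    have hxj : ∀ q ∈ x, (fun p : Passage => p.id == j && p.isOver) q = false := fun q hq => by simp [hfx_j q hq]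
    have hXi : ∀ q ∈ x ++ ([(⟨i, true, s⟩ : Passage), (⟨j, true, -s⟩ : Passage)] ++ z), (fun p : Passage => p.id == i && !p.isOver) q = false := by
      intro q hq
      rcases List.mem_append.1 hq with h | h
      · simp [hfx_i q h]
      rcases List.mem_append.1 h with h | h
      · rcases List.mem_pair.1 h with rfl | rfl <;> simp [Ne.symm hij]
      · simp [hfz_i q h]
    have hXj : ∀ q ∈ x ++ ([(⟨i, true, s⟩ : Passage), (⟨j, true, -s⟩ : Passage)] ++ z), (fun p : Passage => p.id == j && !p.isOver) q = false := by
      intro q hq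
      rcases List.mem_append.1 hq with h | h
      · simp [hfx_j q h]
      rcases List.mem_append.1 h with h | h
      · rcases List.mem_pair.1 h with rfl | rfl <;> simp [hij]
      · simp [hfz_j q h]
    have hsgni : sgn (x ++ [(⟨i, true, s⟩ : Passage), (⟨j, true, -s⟩ : Passage)] ++ (z ++ [(⟨j, false, -s⟩ : Passage), (⟨i, false, s⟩ : Passage)] ++ w)) i = s := by
      rw [eb1]; exact sgn2_first (⟨j, true, -s⟩ : Passage) x _ hfx_i rfl
    have hsgnj : sgn (x ++ [(⟨i, true, s⟩ : Passage), (⟨j, true, -s⟩ : Passage)] ++ (z ++ [(⟨j, false, -s⟩ : Passage), (⟨i, false, s⟩ : Passage)] ++ w)) j = -s := by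
      rw [eb1]; exact sgn2_second x _ hfx_j (by simpa using hij) rfl
    have hLvi : labelAt (x ++ [(⟨i, true, s⟩ : Passage), (⟨j, true, -s⟩ : Passage)] ++ (z ++ [(⟨j, false, -s⟩ : Passage), (⟨i, false, s⟩ : Passage)] ++ w)) (((x ++ [(⟨i, true, s⟩ : Passage), (⟨j, true, -s⟩ : Passage)] ++ (z ++ [(⟨j, false, -s⟩ : Passage), (⟨i, false, s⟩ : Passage)] ++ w))).findIdx (fun p : Passage => p.id == i && p.isOver)) = S x := by
      rw [eb1]; exact lab2_first (⟨j, true, -s⟩ : Passage) x _ hxi (by simp)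
    have hLvj : labelAt (x ++ [(⟨i, true, s⟩ : Passage), (⟨j, true, -s⟩ : Passage)] ++ (z ++ [(⟨j, false, -s⟩ : Passage), (⟨i, false, s⟩ : Passage)] ++ w)) (((x ++ [(⟨i, true, s⟩ : Passage), (⟨j, true, -s⟩ : Passage)] ++ (z ++ [(⟨j, false, -s⟩ : Passage), (⟨i, false, s⟩ : Passage)] ++ w))).findIdx (fun p : Passage => p.id == j && p.isOver)) = S x + Passage.inc (⟨i, true, s⟩ : Passage) := by
      rw [eb1]; exact lab2_second x _ hxj (by simp [hij]) (by simp)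
    have hLwi : labelAt (x ++ [(⟨i, true, s⟩ : Passage), (⟨j, true, -s⟩ : Passage)] ++ (z ++ [(⟨j, false, -s⟩ : Passage), (⟨i, false, s⟩ : Passage)] ++ w)) (((x ++ [(⟨i, true, s⟩ : Passage), (⟨j, true, -s⟩ : Passage)] ++ (z ++ [(⟨j, false, -s⟩ : Passage), (⟨i, false, s⟩ : Passage)] ++ w))).findIdx (fun p : Passage => p.id == i && !p.isOver)) = S (x ++ ([(⟨i, true, s⟩ : Passage), (⟨j, true, -s⟩ : Passage)] ++ z)) + Passage.inc (⟨j, false, -s⟩ : Passage) := by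
      rw [eb2]; exact lab2_second _ w hXi (by simp [Ne.symm hij]) (by simp)
    have hLwj : labelAt (x ++ [(⟨i, true, s⟩ : Passage), (⟨j, true, -s⟩ : Passage)] ++ (z ++ [(⟨j, false, -s⟩ : Passage), (⟨i, false, s⟩ : Passage)] ++ w)) (((x ++ [(⟨i, true, s⟩ : Passage), (⟨j, true, -s⟩ : Passage)] ++ (z ++ [(⟨j, false, -s⟩ : Passage), (⟨i, false, s⟩ : Passage)] ++ w))).findIdx (fun p : Passage => p.id == j && !p.isOver)) = S (x ++ ([(⟨i, true, s⟩ : Passage), (⟨j, true, -s⟩ : Passage)] ++ z)) := by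
      rw [eb2]; exact lab2_first (⟨i, false, s⟩ : Passage) _ w hXj (by simp)
    have hww : wt (x ++ [(⟨i, true, s⟩ : Passage), (⟨j, true, -s⟩ : Passage)] ++ (z ++ [(⟨j, false, -s⟩ : Passage), (⟨i, false, s⟩ : Passage)] ++ w)) i = wt (x ++ [(⟨i, true, s⟩ : Passage), (⟨j, true, -s⟩ : Passage)] ++ (z ++ [(⟨j, false, -s⟩ : Passage), (⟨i, false, s⟩ : Passage)] ++ w)) j := by
      unfold wt overPos underPos
      rw [hLvi, hLwi, hLvj, hLwj, hsgni, hsgnj]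
      simp [S, Passage.inc]
      ring
    exact r2_tail hij s [(⟨i, true, s⟩ : Passage), (⟨j, true, -s⟩ : Passage)] [(⟨j, false, -s⟩ : Passage), (⟨i, false, s⟩ : Passage)] x z w n hfi hfj
      (by intro q hq; rcases List.mem_pair.1 hq with rfl | rfl <;> simp)
      (by intro q hq; rcases List.mem_pair.1 hq with rfl | rfl <;> simp)
      (by simp [Passage.inc]) (by simp [Passage.inc])
      ⟨(⟨i, true, s⟩ : Passage), by simp, rfl⟩ ⟨(⟨j, true, -s⟩ : Passage), by simp, rfl⟩ hsgni hsgnj hww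


/-! #### The third Reidemeister move, assembled -/

lemma goodPair_pairOf {A B : Passage} (hAB : A.id ≠ B.id) (bb : Bool) :
    GoodPair (pairOf bb A B) (pairOf (!bb) A B) := by
  cases bb
  · exact ⟨B, A, Ne.symm hAB, rfl, rfl⟩
  · exact ⟨A, B, hAB, rfl, rfl⟩

lemma idsOf_single (a : KCode) : idsOf [(0, a)] = crossIds a := by
  simp [idsOf, plainL, crossIdsL]

lemma fresh_of_not_mem {a : KCode} {i : ℕ} (h : i ∉ crossIds a) : ∀ q ∈ a, q.id ≠ i :=
  fun q hq hqi => h (mem_crossIds.2 ⟨q, hq, hqi⟩)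

lemma r3_dsum {i j k : ℕ} {si sj sk : ℤ}
    (hsi : si = 1 ∨ si = -1) (hsj : sj = 1 ∨ sj = -1) (hsk : sk = 1 ∨ sk = -1)
    (hij : i ≠ j) (hik : i ≠ k) (hjk : j ≠ k) (t : Bool) (m : ℕ) :
    dsw (pairOf t ⟨i, true, si⟩ ⟨j, true, sj⟩) m +
      (dsw (pairOf (t == (sj * sk == 1)) ⟨i, false, si⟩ ⟨k, true, sk⟩) m +
        (dsw (pairOf (t == (si * sk == 1)) ⟨j, false, sj⟩ ⟨k, false, sk⟩) m + 0)) = 0 := by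
  rcases hsi with rfl | rfl <;> rcases hsj with rfl | rfl <;> rcases hsk with rfl | rfl <;>
    cases t <;>
    by_cases hmi : m = i <;> by_cases hmj : m = j <;> by_cases hmk : m = k <;>
    first
      | (exact absurd (hmi ▸ hmj : i = j) (by exact hij))
      | (exact absurd (hmi ▸ hmk : i = k) (by exact hik))
      | (exact absurd (hmj ▸ hmk : j = k) (by exact hjk))
      | (simp [pairOf, dsw, dsw2, Passage.inc, hmi, hmj, hmk, hij, hik, hjk, Ne.symm hij, Ne.symm hik, Ne.symm hjk])

lemma replC_perm : ∀ (ps : List (KCode × KCode)) (a b : KCode),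
    (∀ q ∈ ps, GoodPair q.1 q.2) → ReplC a b ps [] → a.Perm b := by
  intro ps
  induction ps with
  | nil => intro a b _ h; cases h; exact List.Perm.refl _
  | cons p rest ih =>
    intro a b hgood h
    cases h with
    | cons x u v h' =>
      rename_i y y'
      obtain ⟨A, B, hAB, hu, hv⟩ := hgood (u, v) (by simp)
      subst hu hv
      have hrepl : ReplC (x ++ [B, A] ++ y) (x ++ [B, A] ++ y') rest [] := by
        have := replC_append_left h' (x ++ [B, A])
        simpa [List.append_assoc] using this
      exact (perm_swap_mid A B x y).trans
        (ih _ _ (fun q hq => hgood q (by simp [hq])) hrepl)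

/-! #### The one-step invariance -/

lemma step_case {a b : KCode} (n : ℤ) (hn : n ≠ 0) (h : MoveStep [(0, a)] [(0, b)]) :
    (ValidK a ↔ ValidK b) ∧ (ValidK a → wrn a n = wrn b n) := by
  cases h with
  | perm h =>
    have hab : a = b := by simpa using List.perm_singleton.1 h
    subst hab
    exact ⟨Iff.rfl, fun _ => rfl⟩
  | rotate k x y L =>
    exact ⟨⟨validK_rot, validK_rot⟩, fun hv => (wrn_rot x y hv n).symm⟩
  | rename f hf =>
    exact ⟨(validK_relabel_iff hf a).symm, fun _ => (wrn_relabel hf a n).symm⟩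
  | r1 i o s hs hi hrepl =>
    obtain ⟨b', hb', hC⟩ := replL_singleton_left hrepl
    obtain rfl : b = b' := by simpa using hb'
    obtain ⟨x, y, hA, hB⟩ := replC_one hC
    have hA' : a = x ++ y := by simpa using hA
    subst hA' hB
    rw [idsOf_single] at hi
    have hfresh : ∀ q ∈ x ++ y, q.id ≠ i := fresh_of_not_mem hi
    exact ⟨(r1_valid hs x y hfresh).symm, fun _ => (r1_wrn hs x y hfresh n hn).symm⟩
  | r2 i j o ord s hs hij hi hj hrepl =>
    obtain ⟨b', hb', hC⟩ := replL_singleton_left hrepl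
    obtain rfl : b = b' := by simpa using hb'
    obtain ⟨x, z, w, hA, hB⟩ := replC_two hC
    have hA' : a = x ++ (z ++ w) := by simpa using hA
    subst hA' hB
    rw [idsOf_single] at hi hj
    have hfi : ∀ q ∈ x ++ (z ++ w), q.id ≠ i := fresh_of_not_mem hi
    have hfj : ∀ q ∈ x ++ (z ++ w), q.id ≠ j := fresh_of_not_mem hj
    exact ⟨(r2_valid hs hij x z w hfi hfj).symm, fun _ => (r2_wrn hij x z w hfi hfj n).symm⟩
  | r3 i j k si sj sk hsi hsj hsk hprod hij hik hjk t segs hsegs hrepl =>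
    obtain ⟨b', hb', hC⟩ := replL_singleton_left hrepl
    obtain rfl : b = b' := by simpa using hb'
    have hgood : ∀ q ∈ segs, GoodPair q.1 q.2 := by
      intro q hq
      have hq' := hsegs.subset hq
      simp only [List.mem_cons, List.not_mem_nil, or_false] at hq'
      rcases hq' with rfl | rfl | rfl
      · exact goodPair_pairOf (by simpa using hij) t
      · exact goodPair_pairOf (by simpa using hik) _
      · exact goodPair_pairOf (by simpa using hjk) _
    have hperm : a.Perm b := replC_perm segs a b hgood hC
    refine ⟨⟨fun hv => (master_swap segs a b hgood hC hv).1,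
      fun hv => validK_perm hperm.symm hv⟩, ?_⟩
    intro hval
    obtain ⟨hvalb, _, hwt⟩ := master_swap segs a b hgood hC hval
    have hidperm : (crossIds b).Perm (crossIds a) := ((hperm.map Passage.id).dedup).symm
    rw [wrn_eq_wsum, wrn_eq_wsum, wsum_perm b n hidperm]
    apply wsum_congr
    · intro m hm
      have : wt b m = wt a m := by
        rw [hwt m (mem_crossIds.1 hm)]
        have hz : (segs.map (fun q => dsw q.1 m)).sum = 0 := by
          rw [(hsegs.map _).sum_eq]
          simp only [List.map_cons, List.map_nil, List.sum_cons, List.sum_nil]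
          exact r3_dsum hsi hsj hsk hij hik hjk t m
        rw [hz, add_zero]
      exact this.symm
    · intro m hm
      obtain ⟨q, hq, hqi⟩ := mem_crossIds.1 hm
      rw [sgn_eq_of_mem hval hq hqi, sgn_eq_of_mem hvalb (hperm.subset hq) hqi]

lemma step_shape {L L' : LLC} (h : MoveStep L L') :
    (∀ u : KCode, L = [(0, u)] → ∃ v, L' = [(0, v)]) ∧
    (∀ v : KCode, L' = [(0, v)] → ∃ u, L = [(0, u)]) := by
  cases h with
  | perm h =>
    constructor
    · rintro u rfl; exact ⟨u, List.perm_singleton.1 h.symm⟩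
    · rintro v rfl; exact ⟨v, List.perm_singleton.1 h⟩
  | rotate k x y L =>
    constructor
    · intro u hu
      simp only [List.cons.injEq, Prod.mk.injEq] at hu
      obtain ⟨⟨hk, _⟩, hL⟩ := hu
      subst hk hL
      exact ⟨y ++ x, rfl⟩
    · intro v hv
      simp only [List.cons.injEq, Prod.mk.injEq] at hv
      obtain ⟨⟨hk, _⟩, hL⟩ := hv
      subst hk hL
      exact ⟨x ++ y, rfl⟩
  | rename f hf =>
    constructor
    · rintro u rfl; exact ⟨relabel f u, rfl⟩
    · intro v hv
      match L, hv with
      | [(k, c)], hv =>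
        simp only [List.map_cons, List.map_nil, List.cons.injEq, Prod.mk.injEq] at hv
        obtain ⟨⟨hk, _⟩, _⟩ := hv
        subst hk
        exact ⟨c, rfl⟩
  | r1 i o s hs hi hrepl =>
    constructor
    · rintro u rfl
      obtain ⟨v, hv, _⟩ := replL_singleton_left hrepl
      exact ⟨v, hv⟩
    · rintro v rfl
      obtain ⟨u, hu, _⟩ := replL_singleton_right hrepl
      exact ⟨u, hu⟩
  | r2 i j o ord s hs hij hi hj hrepl =>
    constructor
    · rintro u rfl
      obtain ⟨v, hv, _⟩ := replL_singleton_left hrepl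
      exact ⟨v, hv⟩
    · rintro v rfl
      obtain ⟨u, hu, _⟩ := replL_singleton_right hrepl
      exact ⟨u, hu⟩
  | r3 i j k si sj sk hsi hsj hsk hprod hij hik hjk t segs hsegs hrepl =>
    constructor
    · rintro u rfl
      obtain ⟨v, hv, _⟩ := replL_singleton_left hrepl
      exact ⟨v, hv⟩
    · rintro v rfl
      obtain ⟨u, hu, _⟩ := replL_singleton_right hrepl
      exact ⟨u, hu⟩

end WrnInv

/-- For each nonzero integer `n`, the signed crossing count
`wr_n(K) = ∑_{c : W_K(c) = n} sgn(c)` is an invariant of virtual knots, i.e.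
it is unchanged under oriented virtual isotopy (oriented classical
Reidemeister moves, virtual Reidemeister moves and the detour move, the latter
two leaving the Gauss code unchanged). -/
theorem wrn_isotopy_invariant (a b : KCode) (ha : ValidK a) (hb : ValidK b)
    (n : ℤ) (hn : n ≠ 0) (h : Isotopic [(0, a)] [(0, b)]) :
    wrn a n = wrn b n := by
  have main : ∀ L L', Relation.EqvGen MoveStep L L' →
      (∀ u : KCode, L = [(0, u)] → ∃ v, L' = [(0, v)]) ∧
      (∀ v : KCode, L' = [(0, v)] → ∃ u, L = [(0, u)]) ∧
      (∀ u v : KCode, L = [(0, u)] → L' = [(0, v)] →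
        (ValidK u ↔ ValidK v) ∧ (ValidK u → wrn u n = wrn v n)) := by
    intro L L' hgen
    induction hgen with
    | rel x y hstep =>
      refine ⟨(WrnInv.step_shape hstep).1, (WrnInv.step_shape hstep).2, ?_⟩
      rintro u v rfl rfl
      exact WrnInv.step_case n hn hstep
    | refl x =>
      refine ⟨fun u hu => ⟨u, hu⟩, fun v hv => ⟨v, hv⟩, ?_⟩
      rintro u v rfl hv
      obtain rfl : u = v := by simpa using hv
      exact ⟨Iff.rfl, fun _ => rfl⟩
    | symm x y hstep ih =>
      obtain ⟨s1, s2, pay⟩ := ih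
      refine ⟨s2, s1, ?_⟩
      intro u v hu hv
      obtain ⟨hiff, heq⟩ := pay v u hv hu
      exact ⟨hiff.symm, fun hvu => (heq (hiff.mpr hvu)).symm⟩
    | trans x y z h1 h2 ih1 ih2 =>
      obtain ⟨s1a, s1b, pay1⟩ := ih1
      obtain ⟨s2a, s2b, pay2⟩ := ih2
      refine ⟨?_, ?_, ?_⟩
      · intro u hu
        obtain ⟨w, hw⟩ := s1a u hu
        exact s2a w hw
      · intro v hv
        obtain ⟨w, hw⟩ := s2b v hv
        exact s1b w hw
      · intro u v hu hv
        obtain ⟨w, hw⟩ := s1a u hu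
        obtain ⟨hiff1, he1⟩ := pay1 u w hu hw
        obtain ⟨hiff2, he2⟩ := pay2 w v hw hv
        exact ⟨hiff1.trans hiff2, fun hvu => (he1 hvu).trans (he2 (hiff1.mp hvu))⟩
  exact ((main _ _ h).2.2 a b rfl rfl).2 ha
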